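/- arXiv:1507.04727 — 3 statements merged into one kernel-verified Lean document; each statement's English description precedes it below -/
import Mathlib

section
/- Let x_1, …, x_{KW} ∈ ℝ^M be deterministic covariate vectors, n_1, …, n_{KW} ∈ {0,1}, and let ω, Δ ∈ ℝ^M. Suppose that for all t = 1,…,KW and all τ ∈ [0,1], p_min ≤ logistic(⟨x_t, ω + τΔ⟩) ≤ p_max, where 0 < p_min ≤ p_max < 1. Then the Bregman-type divergence of the negative exponentially weighted log-likelihood satisfies D(Δ, ω) := −L^β(ω+Δ) + L^β(ω) + ⟨Δ, ∇L^β(ω)⟩ ≥ (1/2)·p_min·(1−p_max)·Σ_{i=1}^K Σ_{j=1}^W β^{K−i} ⟨x_{(i−1)W+j}, Δ⟩². -/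
open scoped RealInnerProductSpace BigOperators

/-- The logistic function `u ↦ eᵘ/(1+eᵘ)`. -/
noncomputable def logistic (u : ℝ) : ℝ := Real.exp u / (1 + Real.exp u)

/-- The exponentially weighted log-likelihood. -/
noncomputable def Lbeta (M K W : ℕ) (β : ℝ)
    (x : ℕ → EuclideanSpace ℝ (Fin M)) (n : ℕ → ℝ)
    (ω : EuclideanSpace ℝ (Fin M)) : ℝ :=
  ∑ i ∈ Finset.Icc 1 K, ∑ j ∈ Finset.Icc 1 W,
    β ^ (K - i) * (n ((i - 1) * W + j) * ⟪x ((i - 1) * W + j), ω⟫ -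
      Real.log (1 + Real.exp ⟪x ((i - 1) * W + j), ω⟫))

lemma one_add_exp_pos (v : ℝ) : 0 < 1 + Real.exp v := by positivity

lemma hasDerivAt_log_one_add_exp (v : ℝ) :
    HasDerivAt (fun v => Real.log (1 + Real.exp v)) (logistic v) v := by
  have h1 : HasDerivAt (fun v => 1 + Real.exp v) (Real.exp v) v :=
    (Real.hasDerivAt_exp v).const_add 1
  simpa [logistic] using h1.log (ne_of_gt (one_add_exp_pos v))

lemma hasDerivAt_logistic (v : ℝ) :
    HasDerivAt logistic (logistic v * (1 - logistic v)) v := by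
  have h1 : HasDerivAt (fun v => 1 + Real.exp v) (Real.exp v) v :=
    (Real.hasDerivAt_exp v).const_add 1
  have hpos := one_add_exp_pos v
  have h := (Real.hasDerivAt_exp v).div h1 (ne_of_gt hpos)
  refine h.congr_deriv ?_
  unfold logistic
  field_simp [logistic]

lemma key1d (u a c : ℝ)
    (h : ∀ τ : ℝ, 0 ≤ τ → τ ≤ 1 →
      c ≤ logistic (u + τ * a) * (1 - logistic (u + τ * a))) :
    (1 / 2) * c * a ^ 2 ≤
      Real.log (1 + Real.exp (u + a)) - Real.log (1 + Real.exp u) - a * logistic u := by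
  have hlin : ∀ τ : ℝ, HasDerivAt (fun τ : ℝ => u + τ * a) a τ := fun τ => by
    simpa using ((hasDerivAt_id τ).mul_const a).const_add u
  -- step A : ψ monotone
  set ψ : ℝ → ℝ := fun τ => a * logistic (u + τ * a) - c * τ * a ^ 2 with hψdef
  have hψ' : ∀ τ : ℝ, HasDerivAt ψ
      (a ^ 2 * (logistic (u + τ * a) * (1 - logistic (u + τ * a)) - c)) τ := by
    intro τ
    have h2 : HasDerivAt (fun τ : ℝ => logistic (u + τ * a))
        (logistic (u + τ * a) * (1 - logistic (u + τ * a)) * a) τ :=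
      by have := (hasDerivAt_logistic (u + τ * a)).comp τ (hlin τ); exact this
    have h3 := (h2.const_mul a).sub (((hasDerivAt_id τ).const_mul c).mul_const (a ^ 2))
    refine h3.congr_deriv ?_
    ring
  have hψd : Differentiable ℝ ψ := fun τ => (hψ' τ).differentiableAt
  have hψmono : MonotoneOn ψ (Set.Icc (0:ℝ) 1) := by
    apply monotoneOn_of_deriv_nonneg (convex_Icc 0 1) hψd.continuous.continuousOn
      hψd.differentiableOn
    intro t ht
    rw [interior_Icc] at ht
    rw [(hψ' t).deriv]
    have hc := h t (le_of_lt ht.1) (le_of_lt ht.2)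
    nlinarith [sq_nonneg a]
  -- step B : χ monotone
  set χ : ℝ → ℝ := fun τ => Real.log (1 + Real.exp (u + τ * a)) - τ * (a * logistic u)
      - (1 / 2) * c * τ ^ 2 * a ^ 2 with hχdef
  have hχ' : ∀ τ : ℝ, HasDerivAt χ
      (a * logistic (u + τ * a) - a * logistic u - c * τ * a ^ 2) τ := by
    intro τ
    have h2 : HasDerivAt (fun τ : ℝ => Real.log (1 + Real.exp (u + τ * a)))
        (logistic (u + τ * a) * a) τ :=
      by have := (hasDerivAt_log_one_add_exp (u + τ * a)).comp τ (hlin τ); exact this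
    have h4 : HasDerivAt (fun τ : ℝ => (1 / 2) * c * τ ^ 2 * a ^ 2)
        ((1 / 2) * c * (2 * τ) * a ^ 2) τ := by
      have := (((hasDerivAt_pow 2 τ)).const_mul ((1:ℝ) / 2 * c)).mul_const (a ^ 2)
      refine this.congr_deriv ?_
      ring
    have h3 := (h2.sub ((hasDerivAt_id τ).mul_const (a * logistic u))).sub h4
    refine h3.congr_deriv ?_
    ring
  have hχd : Differentiable ℝ χ := fun τ => (hχ' τ).differentiableAt
  have hχmono : MonotoneOn χ (Set.Icc (0:ℝ) 1) := by
    apply monotoneOn_of_deriv_nonneg (convex_Icc 0 1) hχd.continuous.continuousOn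
      hχd.differentiableOn
    intro t ht
    rw [interior_Icc] at ht
    rw [(hχ' t).deriv]
    have := hψmono (Set.left_mem_Icc.2 zero_le_one)
      (Set.mem_Icc.2 ⟨le_of_lt ht.1, le_of_lt ht.2⟩) (le_of_lt ht.1)
    simp only [hψdef, zero_mul, mul_zero, add_zero, sub_zero] at this
    linarith
  have hfin := hχmono (Set.left_mem_Icc.2 zero_le_one)
    (Set.right_mem_Icc.2 zero_le_one) zero_le_one
  simp only [hχdef] at hfin
  norm_num at hfin
  linarith

/-- if `p_min ≤ logistic⟨x_t, ω + τΔ⟩ ≤ p_max` for all `t = 1,…,KW` and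
all `τ ∈ [0,1]`, then the Bregman-type divergence of the negative exponentially
weighted log-likelihood satisfies
`D(Δ,ω) := −L^β(ω+Δ) + L^β(ω) + ⟨Δ, ∇L^β(ω)⟩
  ≥ (1/2)·p_min·(1−p_max)·Σ_{i=1}^K Σ_{j=1}^W β^{K−i} ⟨x_{(i−1)W+j}, Δ⟩²`. -/
theorem stmt3 (M K W : ℕ) (hW : 1 ≤ W) (β : ℝ) (hβ0 : 0 < β) (hβ1 : β ≤ 1)
    (x : ℕ → EuclideanSpace ℝ (Fin M)) (n : ℕ → ℝ)
    (hn : ∀ t, 1 ≤ t → t ≤ K * W → n t = 0 ∨ n t = 1)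
    (ω Δ : EuclideanSpace ℝ (Fin M)) (pmin pmax : ℝ)
    (hp0 : 0 < pmin) (hpp : pmin ≤ pmax) (hp1 : pmax < 1)
    (hmid : ∀ t, 1 ≤ t → t ≤ K * W → ∀ τ : ℝ, 0 ≤ τ → τ ≤ 1 →
      pmin ≤ logistic ⟪x t, ω + τ • Δ⟫ ∧ logistic ⟪x t, ω + τ • Δ⟫ ≤ pmax) :
    (1 / 2) * pmin * (1 - pmax) *
        ∑ i ∈ Finset.Icc 1 K, ∑ j ∈ Finset.Icc 1 W,
          β ^ (K - i) * ⟪x ((i - 1) * W + j), Δ⟫ ^ 2 ≤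
      -(Lbeta M K W β x n (ω + Δ)) + Lbeta M K W β x n ω +
        ⟪Δ, gradient (Lbeta M K W β x n) ω⟫ := by
  classical
  -- the gradient
  set G : EuclideanSpace ℝ (Fin M) := ∑ i ∈ Finset.Icc 1 K, ∑ j ∈ Finset.Icc 1 W,
    (β ^ (K - i) * (n ((i - 1) * W + j) - logistic ⟪x ((i - 1) * W + j), ω⟫))
      • x ((i - 1) * W + j) with hGdef
  have hG : HasGradientAt (Lbeta M K W β x n) G ω := by
    rw [hasGradientAt_iff_hasFDerivAt]
    have hterm : ∀ t : ℕ, ∀ c : ℝ, HasFDerivAt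
        (fun y : EuclideanSpace ℝ (Fin M) => c * (n t * ⟪x t, y⟫ - Real.log (1 + Real.exp ⟪x t, y⟫)))
        ((c * (n t - logistic ⟪x t, ω⟫)) • innerSL ℝ (x t)) ω := by
      intro t c
      have h1 : HasFDerivAt (fun y : EuclideanSpace ℝ (Fin M) => ⟪x t, y⟫) (innerSL ℝ (x t)) ω :=
        (innerSL ℝ (x t)).hasFDerivAt
      have h2 : HasFDerivAt (fun y : EuclideanSpace ℝ (Fin M) => Real.log (1 + Real.exp ⟪x t, y⟫))
          (logistic ⟪x t, ω⟫ • innerSL ℝ (x t)) ω :=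
        (hasDerivAt_log_one_add_exp ⟪x t, ω⟫).comp_hasFDerivAt ω h1
      have h3 := ((h1.const_mul (n t)).sub h2).const_mul c
      refine h3.congr_fderiv ?_
      ext y
      simp
      ring
    have hsum : HasFDerivAt (Lbeta M K W β x n)
        (∑ i ∈ Finset.Icc 1 K, ∑ j ∈ Finset.Icc 1 W,
          (β ^ (K - i) * (n ((i - 1) * W + j) - logistic ⟪x ((i - 1) * W + j), ω⟫))
            • innerSL ℝ (x ((i - 1) * W + j))) ω := by
      unfold Lbeta
      apply HasFDerivAt.fun_sum
      intro i _
      apply HasFDerivAt.fun_sum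
      intro j _
      exact hterm _ _
    refine hsum.congr_fderiv ?_
    ext y
    rw [hGdef]
    simp only [InnerProductSpace.toDual_apply_apply, ContinuousLinearMap.coe_sum',
      Finset.sum_apply, ContinuousLinearMap.coe_smul', Pi.smul_apply,
      innerSL_apply_apply, smul_eq_mul, sum_inner, inner_smul_left]
    simp [RCLike.conj_to_real]
  have hgrad : gradient (Lbeta M K W β x n) ω = G := hG.gradient
  -- inner product with the gradient
  have hinner : ⟪Δ, G⟫ = ∑ i ∈ Finset.Icc 1 K, ∑ j ∈ Finset.Icc 1 W,
      β ^ (K - i) * ((n ((i - 1) * W + j) - logistic ⟪x ((i - 1) * W + j), ω⟫)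
        * ⟪x ((i - 1) * W + j), Δ⟫) := by
    rw [hGdef, inner_sum]
    apply Finset.sum_congr rfl
    intro i _
    rw [inner_sum]
    apply Finset.sum_congr rfl
    intro j _
    rw [real_inner_smul_right, real_inner_comm Δ (x ((i - 1) * W + j))]
    ring
  -- rewrite RHS as a double sum
  have hrw : -(Lbeta M K W β x n (ω + Δ)) + Lbeta M K W β x n ω + ⟪Δ, G⟫ =
      ∑ i ∈ Finset.Icc 1 K, ∑ j ∈ Finset.Icc 1 W,
        β ^ (K - i) * (Real.log (1 + Real.exp (⟪x ((i - 1) * W + j), ω⟫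
            + ⟪x ((i - 1) * W + j), Δ⟫))
          - Real.log (1 + Real.exp ⟪x ((i - 1) * W + j), ω⟫)
          - ⟪x ((i - 1) * W + j), Δ⟫ * logistic ⟪x ((i - 1) * W + j), ω⟫) := by
    rw [hinner]
    unfold Lbeta
    rw [← Finset.sum_neg_distrib, ← Finset.sum_add_distrib, ← Finset.sum_add_distrib]
    apply Finset.sum_congr rfl
    intro i _
    rw [← Finset.sum_neg_distrib, ← Finset.sum_add_distrib, ← Finset.sum_add_distrib]
    apply Finset.sum_congr rfl
    intro j _
    rw [inner_add_right]
    ring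
  rw [hgrad, hrw, Finset.mul_sum]
  apply Finset.sum_le_sum
  intro i hi
  rw [Finset.mul_sum]
  apply Finset.sum_le_sum
  intro j hj
  rw [Finset.mem_Icc] at hi hj
  set t := (i - 1) * W + j with htdef
  have ht1 : 1 ≤ t := le_add_of_nonneg_of_le (Nat.zero_le _) hj.1
  have ht2 : t ≤ K * W := by
    calc t ≤ (i - 1) * W + W := Nat.add_le_add_left hj.2 _
      _ = ((i - 1) + 1) * W := (Nat.succ_mul _ _).symm
      _ = i * W := by rw [Nat.sub_add_cancel hi.1]
      _ ≤ K * W := Nat.mul_le_mul_right W hi.2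
  set u := ⟪x t, ω⟫ with hudef
  set a := ⟪x t, Δ⟫ with hadef
  have hkey : (1 / 2) * (pmin * (1 - pmax)) * a ^ 2 ≤
      Real.log (1 + Real.exp (u + a)) - Real.log (1 + Real.exp u) - a * logistic u := by
    apply key1d
    intro τ hτ0 hτ1
    have hm := hmid t ht1 ht2 τ hτ0 hτ1
    have heq : ⟪x t, ω + τ • Δ⟫ = u + τ * a := by
      rw [inner_add_right, real_inner_smul_right]
    rw [heq] at hm
    nlinarith [hm.1, hm.2]
  have hβpow : (0:ℝ) ≤ β ^ (K - i) := le_of_lt (pow_pos hβ0 _)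
  calc (1 / 2) * pmin * (1 - pmax) * (β ^ (K - i) * a ^ 2)
      = β ^ (K - i) * ((1 / 2) * (pmin * (1 - pmax)) * a ^ 2) := by ring
    _ ≤ β ^ (K - i) * (Real.log (1 + Real.exp (u + a)) - Real.log (1 + Real.exp u)
        - a * logistic u) := by
        exact mul_le_mul_of_nonneg_left hkey hβpow
end

section
/- For every pair of distinct indices m, m' ∈ {2, …, M} with m ≠ m' and every t > 0, the off-diagonal entries of the weighted empirical covariance matrix C_β, despite the dependence induced by the Toeplitz shift structure of the covariates, satisfy P( |(C_β)_{m,m'}| > t ) ≤ 4 exp( −N_β t² σ⁴ / (8 B⁴) ). -/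
open MeasureTheory ProbabilityTheory
open scoped BigOperators

/-- Entry `m` of the covariate vector `x_t = (σ, s_{t−M+2}, …, s_t)'` (first entry
equal to `σ`): for `m = 0` it is `σ`, and for `m ≥ 1` it is `s_{t−M+(m+1)}`. -/
noncomputable def covEntry {Ω : Type*} (M : ℕ) (σR : ℝ) (s : ℤ → Ω → ℝ)
    (t : ℤ) (m : Fin M) (ωb : Ω) : ℝ :=
  if (m : ℕ) = 0 then σR else s (t - M + (m : ℕ) + 1) ωb

/-- `N_β := W(1−β^{K+1})/(1−β)`. -/
noncomputable def Nbeta (K W : ℕ) (β : ℝ) : ℝ := W * (1 - β ^ (K + 1)) / (1 - β)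

/-- The `(m,m')` entry of the weighted empirical covariance matrix
`C_β := (1/(σ²N_β)) Σ_{i=1}^K Σ_{j=1}^W β^{K−i} x_{(i−1)W+j} x'_{(i−1)W+j}`. -/
noncomputable def Cbeta {Ω : Type*} (M K W : ℕ) (β σR : ℝ) (s : ℤ → Ω → ℝ)
    (m m' : Fin M) (ωb : Ω) : ℝ :=
  (1 / (σR ^ 2 * Nbeta K W β)) *
    ∑ i ∈ Finset.Icc 1 K, ∑ j ∈ Finset.Icc 1 W,
      β ^ (K - i) * (covEntry M σR s (((i - 1) * W + j : ℕ) : ℤ) m ωb *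
        covEntry M σR s (((i - 1) * W + j : ℕ) : ℤ) m' ωb)


open Real

lemma aux_integrable_of_abs_le {Ω : Type*} {mΩ : MeasurableSpace Ω} {μ : Measure Ω}
    [IsFiniteMeasure μ] {X : Ω → ℝ} {C : ℝ}
    (hXm : AEStronglyMeasurable X μ) (h : ∀ᵐ ω ∂μ, |X ω| ≤ C) :
    Integrable X μ :=
  (integrable_const C).mono' hXm (by filter_upwards [h] with ω hω; simpa using hω)

lemma aux_mgf_le {Ω : Type*} {mΩ : MeasurableSpace Ω} {μ : Measure Ω}
    [IsProbabilityMeasure μ] {X : Ω → ℝ} {c : ℝ}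
    (hXm : Measurable X) (hmean : ∫ ω, X ω ∂μ = 0)
    (hbd : ∀ᵐ ω ∂μ, |X ω| ≤ c) (lam : ℝ) :
    mgf X μ lam ≤ Real.exp (lam ^ 2 * c ^ 2 / 2) := by
  have hc : 0 ≤ c := by
    obtain ⟨ω, hω⟩ := hbd.exists
    exact le_trans (abs_nonneg _) hω
  rcases hc.eq_or_lt with h0 | hcpos
  · have hX0 : ∀ᵐ ω ∂μ, X ω = 0 := by
      filter_upwards [hbd] with ω hω
      exact abs_eq_zero.mp (le_antisymm (h0 ▸ hω) (abs_nonneg _))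
    have hmgf1 : mgf X μ lam = 1 := by
      rw [mgf, integral_congr_ae (g := fun _ => (1:ℝ))
        (by filter_upwards [hX0] with ω hω; simp [hω])]
      simp
    rw [hmgf1]
    exact Real.one_le_exp (by positivity)
  · have hXint : Integrable X μ := aux_integrable_of_abs_le hXm.aestronglyMeasurable hbd
    have key : ∀ᵐ ω ∂μ, Real.exp (lam * X ω)
        ≤ Real.cosh (lam * c) + X ω * (Real.sinh (lam * c) / c) := by
      filter_upwards [hbd] with ω hω
      obtain ⟨h1, h2⟩ := abs_le.mp hω
      have hu : (0:ℝ) ≤ (c + X ω) / (2 * c) := div_nonneg (by linarith) (by linarith)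
      have hv : (0:ℝ) ≤ (c - X ω) / (2 * c) := div_nonneg (by linarith) (by linarith)
      have huv : (c + X ω)/(2*c) + (c - X ω)/(2*c) = 1 := by
        field_simp
        ring
      have hcx := convexOn_exp.2 (Set.mem_univ (lam*c)) (Set.mem_univ (-(lam*c))) hu hv huv
      rw [smul_eq_mul, smul_eq_mul] at hcx
      have harg : (c + X ω)/(2*c) * (lam*c) + (c - X ω)/(2*c) * (-(lam*c)) = lam * X ω := by
        field_simp
        ring
      rw [harg] at hcx
      refine hcx.trans (le_of_eq ?_)
      rw [Real.cosh_eq, Real.sinh_eq]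
      have hcne : c ≠ 0 := hcpos.ne'
      field_simp
      linear_combination (rexp (c * lam) * X ω - X ω * rexp (-(c * lam)) + c * rexp (c * lam) + c * rexp (-(c * lam))) * mul_inv_cancel₀ hcne
    have hlint : Integrable (fun ω => Real.exp (lam * X ω)) μ := by
      refine aux_integrable_of_abs_le ((hXm.const_mul lam).exp.aestronglyMeasurable)
        (C := Real.exp (|lam| * c)) ?_
      filter_upwards [hbd] with ω hω
      rw [abs_of_pos (Real.exp_pos _)]
      apply Real.exp_le_exp.mpr
      calc lam * X ω ≤ |lam * X ω| := le_abs_self _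
        _ = |lam| * |X ω| := abs_mul _ _
        _ ≤ |lam| * c := mul_le_mul_of_nonneg_left hω (abs_nonneg _)
    have hrint : Integrable (fun ω => Real.cosh (lam*c) + X ω * (Real.sinh (lam*c) / c)) μ :=
      (integrable_const _).add (hXint.mul_const _)
    have step1 : mgf X μ lam ≤ Real.cosh (lam * c) := by
      have := integral_mono_ae hlint hrint key
      rw [integral_add (integrable_const _) (hXint.mul_const _), integral_const,
        integral_mul_const, hmean] at this
      simpa [mgf] using this
    refine step1.trans ?_
    calc Real.cosh (lam * c) ≤ Real.exp ((lam * c) ^ 2 / 2) := Real.cosh_le_exp_half_sq _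
      _ = Real.exp (lam ^ 2 * c ^ 2 / 2) := by rw [mul_pow]


lemma aux_mgf_sum_prod {Ω : Type*} {mΩ : MeasurableSpace Ω} {μ : Measure Ω}
    [IsProbabilityMeasure μ] {ι κ : Type*} [DecidableEq κ]
    (f : ι → Ω → ℝ) (hf : iIndepFun f μ)
    (hfm : ∀ i, Measurable (f i)) (A C : κ → ι) (w : κ → ℝ) (lam : ℝ) :
    ∀ T : Finset κ,
      (∀ p ∈ T, ∀ q ∈ T, p ≠ q → A p ≠ A q ∧ A p ≠ C q ∧ C p ≠ A q ∧ C p ≠ C q) →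
      mgf (fun ω => ∑ p ∈ T, w p * (f (A p) ω * f (C p) ω)) μ lam
        = ∏ p ∈ T, mgf (fun ω => w p * (f (A p) ω * f (C p) ω)) μ lam := by
  classical
  intro T
  induction T using Finset.induction_on with
  | empty =>
    intro _
    simp [mgf]
  | @insert p T hpT ih =>
    intro hpair
    have hXmeas : ∀ q : κ, Measurable (fun ω => w q * (f (A q) ω * f (C q) ω)) :=
      fun q => ((hfm (A q)).mul (hfm (C q))).const_mul (w q)
    have hkey : IndepFun (fun ω => w p * (f (A p) ω * f (C p) ω))
        (fun ω => ∑ q ∈ T, w q * (f (A q) ω * f (C q) ω)) μ := by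
      set S1 : Finset ι := {A p, C p} with hS1
      set S2 : Finset ι := T.biUnion (fun q => {A q, C q}) with hS2
      have hdisj : Disjoint S1 S2 := by
        rw [Finset.disjoint_left]
        intro x hx1 hx2
        obtain ⟨q, hqT, hq⟩ := Finset.mem_biUnion.mp hx2
        have hpq : p ≠ q := fun h => hpT (h ▸ hqT)
        obtain ⟨h1, h2, h3, h4⟩ := hpair p (Finset.mem_insert_self _ _) q
          (Finset.mem_insert_of_mem hqT) hpq
        simp only [hS1, Finset.mem_insert, Finset.mem_singleton] at hx1 hq
        rcases hx1 with rfl | rfl <;> tauto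
      have h0 := hf.indepFun_finset S1 S2 hdisj hfm
      have hmemA : A p ∈ S1 := Finset.mem_insert_self _ _
      have hmemC : C p ∈ S1 := Finset.mem_insert_of_mem (Finset.mem_singleton_self _)
      set g1 : (∀ _ : ↥S1, ℝ) → ℝ :=
        fun v => w p * (v ⟨A p, hmemA⟩ * v ⟨C p, hmemC⟩) with hg1def
      set g2 : (∀ _ : ↥S2, ℝ) → ℝ :=
        fun v => ∑ q ∈ T.attach, w q *
          (v ⟨A q, Finset.mem_biUnion.mpr ⟨q, q.2, Finset.mem_insert_self _ _⟩⟩ *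
           v ⟨C q, Finset.mem_biUnion.mpr
              ⟨q, q.2, Finset.mem_insert_of_mem (Finset.mem_singleton_self _)⟩⟩) with hg2def
      have hg1 : Measurable g1 := by
        rw [hg1def]; fun_prop
      have hg2 : Measurable g2 := by
        rw [hg2def]
        refine Finset.measurable_sum _ fun q _ => ?_
        have h1 : Measurable fun v : (∀ _ : ↥S2, ℝ) =>
            v ⟨A q, Finset.mem_biUnion.mpr ⟨q, q.2, Finset.mem_insert_self _ _⟩⟩ :=
          measurable_pi_apply _
        have h2 : Measurable fun v : (∀ _ : ↥S2, ℝ) =>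
            v ⟨C q, Finset.mem_biUnion.mpr
              ⟨q, q.2, Finset.mem_insert_of_mem (Finset.mem_singleton_self _)⟩⟩ :=
          measurable_pi_apply _
        exact (h1.mul h2).const_mul _
      have hcomp := h0.comp hg1 hg2
      have e1 : (g1 ∘ fun a (i : ↥S1) => f i a)
          = fun ω => w p * (f (A p) ω * f (C p) ω) := rfl
      have e2 : (g2 ∘ fun a (i : ↥S2) => f i a)
          = fun ω => ∑ q ∈ T, w q * (f (A q) ω * f (C q) ω) := by
        funext ω
        exact Finset.sum_attach T (fun q => w q * (f (A q) ω * f (C q) ω))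
      rw [e1, e2] at hcomp
      exact hcomp
    have hsum_insert : (fun ω => ∑ q ∈ insert p T, w q * (f (A q) ω * f (C q) ω))
        = (fun ω => w p * (f (A p) ω * f (C p) ω))
          + (fun ω => ∑ q ∈ T, w q * (f (A q) ω * f (C q) ω)) := by
      funext ω
      simp [Finset.sum_insert hpT]
    rw [hsum_insert, Finset.prod_insert hpT,
      hkey.mgf_add' (hXmeas p).aestronglyMeasurable
        (Finset.measurable_sum T fun q _ => hXmeas q).aestronglyMeasurable,
      ih (fun a ha b hb hab => hpair a (Finset.mem_insert_of_mem ha)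
        b (Finset.mem_insert_of_mem hb) hab)]


lemma aux_classBound {Ω : Type*} {mΩ : MeasurableSpace Ω} {μ : Measure Ω}
    [IsProbabilityMeasure μ] {ι κ : Type*} [DecidableEq κ]
    (f : ι → Ω → ℝ) (hf : iIndepFun f μ)
    (hfm : ∀ i, Measurable (f i))
    (Bb : ℝ) (hBb : 0 ≤ Bb) (hfb : ∀ i, ∀ᵐ ω ∂μ, |f i ω| ≤ Bb)
    (hfmean : ∀ i, ∫ ω, f i ω ∂μ = 0)
    (T : Finset κ) (A C : κ → ι) (w : κ → ℝ)
    (hAC : ∀ p ∈ T, A p ≠ C p)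
    (hpair : ∀ p ∈ T, ∀ q ∈ T, p ≠ q → A p ≠ A q ∧ A p ≠ C q ∧ C p ≠ A q ∧ C p ≠ C q)
    (V u : ℝ) (hV : 0 < V) (hu : 0 < u)
    (hsum : ∑ p ∈ T, (w p * Bb ^ 2) ^ 2 ≤ V) :
    (μ {ω | u ≤ ∑ p ∈ T, w p * (f (A p) ω * f (C p) ω)}).toReal
      ≤ Real.exp (-(u ^ 2) / (2 * V)) := by
  classical
  set lam : ℝ := u / V with hlam
  have hlam0 : 0 ≤ lam := div_nonneg hu.le hV.le
  set X : κ → Ω → ℝ := fun p ω => w p * (f (A p) ω * f (C p) ω) with hX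
  have hXmeas : ∀ p, Measurable (X p) := fun p =>
    ((hfm (A p)).mul (hfm (C p))).const_mul (w p)
  have hXbd : ∀ p, ∀ᵐ ω ∂μ, |X p ω| ≤ |w p| * Bb ^ 2 := by
    intro p
    filter_upwards [hfb (A p), hfb (C p)] with ω h1 h2
    rw [hX]
    simp only
    rw [abs_mul, abs_mul]
    have : |f (A p) ω| * |f (C p) ω| ≤ Bb * Bb :=
      mul_le_mul h1 h2 (abs_nonneg _) hBb
    calc |w p| * (|f (A p) ω| * |f (C p) ω|) ≤ |w p| * (Bb * Bb) :=
          mul_le_mul_of_nonneg_left this (abs_nonneg _)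
      _ = |w p| * Bb ^ 2 := by ring
  have hXmean : ∀ p ∈ T, ∫ ω, X p ω ∂μ = 0 := by
    intro p hp
    have hint := (hf.indepFun (hAC p hp)).integral_mul_eq_mul_integral
      (hfm (A p)).aestronglyMeasurable (hfm (C p)).aestronglyMeasurable
    rw [hX]
    simp only
    rw [integral_const_mul]
    have : (∫ ω, f (A p) ω * f (C p) ω ∂μ) = 0 := by
      have h2 : (∫ ω, (f (A p) * f (C p)) ω ∂μ) = (∫ ω, f (A p) ω ∂μ) * ∫ ω, f (C p) ω ∂μ :=
        hint
      simp only [Pi.mul_apply] at h2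
      rw [h2, hfmean, hfmean, mul_zero]
    rw [this, mul_zero]
  -- mgf bound
  have hmgf : mgf (fun ω => ∑ p ∈ T, X p ω) μ lam ≤ Real.exp (lam ^ 2 * V / 2) := by
    rw [aux_mgf_sum_prod f hf hfm A C w lam T hpair]
    calc ∏ p ∈ T, mgf (X p) μ lam
        ≤ ∏ p ∈ T, Real.exp (lam ^ 2 * (w p * Bb ^ 2) ^ 2 / 2) := by
          refine Finset.prod_le_prod (fun p _ => mgf_nonneg) (fun p hp => ?_)
          have := aux_mgf_le (hXmeas p) (hXmean p hp) (hXbd p) lam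
          refine this.trans (le_of_eq ?_)
          rw [mul_pow, mul_pow, sq_abs]
      _ = Real.exp (∑ p ∈ T, lam ^ 2 * (w p * Bb ^ 2) ^ 2 / 2) := (Real.exp_sum _ _).symm
      _ ≤ Real.exp (lam ^ 2 * V / 2) := by
          apply Real.exp_le_exp.mpr
          have : ∑ p ∈ T, lam ^ 2 * (w p * Bb ^ 2) ^ 2 / 2
              = lam ^ 2 / 2 * ∑ p ∈ T, (w p * Bb ^ 2) ^ 2 := by
            rw [Finset.mul_sum]
            exact Finset.sum_congr rfl fun p _ => by ring
          rw [this]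
          calc lam ^ 2 / 2 * ∑ p ∈ T, (w p * Bb ^ 2) ^ 2 ≤ lam ^ 2 / 2 * V :=
                mul_le_mul_of_nonneg_left hsum (by positivity)
            _ = lam ^ 2 * V / 2 := by ring
  -- integrability
  have hint : Integrable (fun ω => Real.exp (lam * ∑ p ∈ T, X p ω)) μ := by
    have hb : ∀ᵐ ω ∂μ, |∑ p ∈ T, X p ω| ≤ ∑ p ∈ T, |w p| * Bb ^ 2 := by
      have hall : ∀ᵐ ω ∂μ, ∀ p ∈ T, |X p ω| ≤ |w p| * Bb ^ 2 :=
        (ae_ball_iff T.countable_toSet).mpr fun p _ => hXbd p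
      filter_upwards [hall] with ω hω
      calc |∑ p ∈ T, X p ω| ≤ ∑ p ∈ T, |X p ω| := Finset.abs_sum_le_sum_abs _ _
        _ ≤ ∑ p ∈ T, |w p| * Bb ^ 2 := Finset.sum_le_sum hω
    refine aux_integrable_of_abs_le
      (((Finset.measurable_sum T fun p _ => hXmeas p).const_mul lam).exp.aestronglyMeasurable)
      (C := Real.exp (lam * ∑ p ∈ T, |w p| * Bb ^ 2)) ?_
    filter_upwards [hb] with ω hω
    rw [abs_of_pos (Real.exp_pos _)]
    apply Real.exp_le_exp.mpr
    exact mul_le_mul_of_nonneg_left (le_trans (le_abs_self _) hω) hlam0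
  -- Chernoff
  have hch := measure_ge_le_exp_mul_mgf (μ := μ) (X := fun ω => ∑ p ∈ T, X p ω) u hlam0 hint
  refine hch.trans ?_
  calc Real.exp (-lam * u) * mgf (fun ω => ∑ p ∈ T, X p ω) μ lam
      ≤ Real.exp (-lam * u) * Real.exp (lam ^ 2 * V / 2) :=
        mul_le_mul_of_nonneg_left hmgf (Real.exp_pos _).le
    _ = Real.exp (-lam * u + lam ^ 2 * V / 2) := (Real.exp_add _ _).symm
    _ = Real.exp (-(u ^ 2) / (2 * V)) := by
        congr 1
        rw [hlam]
        field_simp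
        ring


lemma aux_div_key {W : ℕ} (hW : 0 < W) (x y : ℕ) (h1 : 1 ≤ y) (h2 : y ≤ W) :
    (x * W + y - 1) / W = x := by
  have e : x * W = W * x := Nat.mul_comm x W
  have e2 : x * W + y - 1 = y - 1 + W * x := by omega
  rw [e2, Nat.add_mul_div_left _ _ hW, Nat.div_eq_of_lt (by omega)]; omega

lemma aux_tau_inj {W : ℕ} (hW : 1 ≤ W) {p q : ℕ × ℕ}
    (hp1 : 1 ≤ p.1) (hp2a : 1 ≤ p.2) (hp2b : p.2 ≤ W)
    (hq1 : 1 ≤ q.1) (hq2a : 1 ≤ q.2) (hq2b : q.2 ≤ W)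
    (h : (p.1 - 1) * W + p.2 = (q.1 - 1) * W + q.2) : p = q := by
  have hW0 : 0 < W := hW
  have e1 : ((p.1 - 1) * W + p.2 - 1) / W = p.1 - 1 := aux_div_key hW0 _ _ hp2a hp2b
  have e2 : ((q.1 - 1) * W + q.2 - 1) / W = q.1 - 1 := aux_div_key hW0 _ _ hq2a hq2b
  have h1 : p.1 - 1 = q.1 - 1 := by rw [← e1, ← e2, h]
  have hfst : p.1 = q.1 := by omega
  have e3 : (p.1 - 1) * W = (q.1 - 1) * W := by rw [hfst]
  have hsnd : p.2 = q.2 := by omega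
  exact Prod.ext hfst hsnd

lemma aux_parity {L : ℕ} (hL : 0 < L) {n m : ℕ} (h1 : 1 ≤ n) (hm : m = n + L)
    (hpar : ((n - 1) / L) % 2 = ((m - 1) / L) % 2) : False := by
  have e1 : m - 1 = (n - 1) + L := by omega
  rw [e1, Nat.add_div_right _ hL] at hpar
  omega

lemma aux_tau_le {K W : ℕ} (hK : 1 ≤ K) (hW : 1 ≤ W) {p : ℕ × ℕ}
    (hp1 : p.1 ≤ K) (hp2 : p.2 ≤ W) : (p.1 - 1) * W + p.2 ≤ K * W := by
  have h1 : p.1 - 1 ≤ K - 1 := by omega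
  have h2 : (p.1 - 1) * W ≤ (K - 1) * W := Nat.mul_le_mul_right _ h1
  have h3 : (K - 1) * W + W = K * W := by
    have : K - 1 + 1 = K := by omega
    calc (K - 1) * W + W = (K - 1 + 1) * W := by ring
      _ = K * W := by rw [this]
  omega


lemma aux_geom {K W : ℕ} (hK : 1 ≤ K) (hW : 1 ≤ W) {β : ℝ} (hβ0 : 0 < β) (hβ1 : β < 1)
    {B4 : ℝ} (hB4 : 0 ≤ B4) :
    ∑ p ∈ (Finset.Icc 1 K ×ˢ Finset.Icc 1 W), β ^ (K - p.1) * B4 ≤ Nbeta K W β * B4 := by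
  rw [Finset.sum_product]
  have hconst : ∀ i ∈ Finset.Icc 1 K,
      ∑ _j ∈ Finset.Icc 1 W, β ^ (K - i) * B4 = β ^ (K - i) * ((W : ℝ) * B4) := by
    intro i _
    rw [Finset.sum_const, Nat.card_Icc, show W + 1 - 1 = W from by omega, nsmul_eq_mul]
    ring
  rw [Finset.sum_congr rfl hconst, ← Finset.sum_mul]
  have hre : ∑ i ∈ Finset.Icc 1 K, β ^ (K - i) = ∑ k ∈ Finset.range K, β ^ k := by
    refine Finset.sum_nbij' (fun i => K - i) (fun k => K - k) ?_ ?_ ?_ ?_ ?_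
    · intro a ha
      simp only [Finset.mem_Icc] at ha
      simp only [Finset.mem_range]
      omega
    · intro a ha
      simp only [Finset.mem_range] at ha
      simp only [Finset.mem_Icc]
      omega
    · intro a ha
      simp only [Finset.mem_Icc] at ha
      show K - (K - a) = a
      omega
    · intro a ha
      simp only [Finset.mem_range] at ha
      show K - (K - a) = a
      omega
    · intro a _
      rfl
  rw [hre]
  have hgsum : ∑ k ∈ Finset.range K, β ^ k ≤ (1 - β ^ (K + 1)) / (1 - β) := by
    have h1 : ∑ k ∈ Finset.range K, β ^ k ≤ ∑ k ∈ Finset.range (K + 1), β ^ k :=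
      Finset.sum_le_sum_of_subset_of_nonneg (Finset.range_subset_range.mpr (Nat.le_succ K))
        (fun i _ _ => pow_nonneg hβ0.le i)
    have h2 : ∑ k ∈ Finset.range (K + 1), β ^ k = (β ^ (K + 1) - 1) / (β - 1) :=
      geom_sum_eq hβ1.ne (K + 1)
    have h3 : (β ^ (K + 1) - 1) / (β - 1) = (1 - β ^ (K + 1)) / (1 - β) := by
      rw [div_eq_div_iff (by linarith) (by linarith)]
      ring
    rw [h2, h3] at h1
    exact h1
  have hWB : 0 ≤ (W : ℝ) * B4 := by positivity
  calc (∑ k ∈ Finset.range K, β ^ k) * ((W : ℝ) * B4)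
      ≤ ((1 - β ^ (K + 1)) / (1 - β)) * ((W : ℝ) * B4) :=
        mul_le_mul_of_nonneg_right hgsum hWB
    _ = Nbeta K W β * B4 := by rw [Nbeta]; ring


lemma Cbeta_comm {Ω : Type*} (M K W : ℕ) (β σR : ℝ) (s : ℤ → Ω → ℝ)
    (m m' : Fin M) (ωb : Ω) :
    Cbeta M K W β σR s m m' ωb = Cbeta M K W β σR s m' m ωb := by
  unfold Cbeta
  congr 1
  refine Finset.sum_congr rfl (fun i _ => ?_)
  refine Finset.sum_congr rfl (fun j _ => ?_)
  ring

lemma stmt7_aux {Ω : Type*} {mΩ : MeasurableSpace Ω} (μ : Measure Ω)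
    [IsProbabilityMeasure μ]
    (M K W : ℕ) (hM : 2 ≤ M) (hK : 1 ≤ K) (hW : 1 ≤ W)
    (β σR B : ℝ) (hβ0 : 0 < β) (hβ1 : β < 1) (hσ : 0 < σR) (hB : 0 < B)
    (s : ℤ → Ω → ℝ) (hmeas : ∀ t, Measurable (s t))
    (hindep : iIndepFun
      (fun t : ↥(Set.Icc (-(M : ℤ) + 1) ((K * W : ℕ) : ℤ)) => s t) μ)
    (hmean : ∀ t : ℤ, -(M : ℤ) + 1 ≤ t → t ≤ (K * W : ℕ) → ∫ ωb, s t ωb ∂μ = 0)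
    (hbd : ∀ t : ℤ, -(M : ℤ) + 1 ≤ t → t ≤ (K * W : ℕ) → ∀ᵐ ωb ∂μ, |s t ωb| ≤ B)
    (m m' : Fin M) (hm : (m : ℕ) ≠ 0) (hm' : (m' : ℕ) ≠ 0) (hlt : (m : ℕ) < (m' : ℕ))
    (t : ℝ) (ht : 0 < t) :
    (μ {ωb | t < |Cbeta M K W β σR s m m' ωb|}).toReal ≤
      4 * Real.exp (-(Nbeta K W β) * t ^ 2 * σR ^ 4 / (8 * B ^ 4)) := by
  classical
  have hlohi : (-(M : ℤ) + 1) ≤ ((K * W : ℕ) : ℤ) := by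
    have h1 : (0:ℤ) ≤ ((K * W : ℕ) : ℤ) := Int.natCast_nonneg _
    have h2 : (2:ℤ) ≤ (M:ℤ) := by exact_mod_cast hM
    omega
  set clamp : ℤ → ↥(Set.Icc (-(M : ℤ) + 1) ((K * W : ℕ) : ℤ)) := fun z =>
    ⟨max (-(M : ℤ) + 1) (min z ((K * W : ℕ) : ℤ)),
      Set.mem_Icc.mpr ⟨le_max_left _ _, max_le hlohi (min_le_right _ _)⟩⟩ with hclamp
  have hclamp_eq : ∀ z : ℤ, (-(M : ℤ) + 1) ≤ z → z ≤ ((K * W : ℕ) : ℤ) →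
      (clamp z).1 = z := by
    intro z h1 h2
    rw [hclamp]
    simp only
    rw [min_eq_left h2, max_eq_right h1]
  set P : Finset (ℕ × ℕ) := Finset.Icc 1 K ×ˢ Finset.Icc 1 W with hP
  have hPmem : ∀ p ∈ P, 1 ≤ p.1 ∧ p.1 ≤ K ∧ 1 ≤ p.2 ∧ p.2 ≤ W := by
    intro p hp
    rw [hP, Finset.mem_product, Finset.mem_Icc, Finset.mem_Icc] at hp
    exact ⟨hp.1.1, hp.1.2, hp.2.1, hp.2.2⟩
  have hτb : ∀ p ∈ P, 1 ≤ (p.1 - 1) * W + p.2 ∧ (p.1 - 1) * W + p.2 ≤ K * W := by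
    intro p hp
    obtain ⟨h1, h2, h3, h4⟩ := hPmem p hp
    exact ⟨by omega, aux_tau_le hK hW h2 h4⟩
  set L : ℕ := (m' : ℕ) - (m : ℕ) with hLdef
  have hL0 : 0 < L := by omega
  set da : ℤ := -(M:ℤ) + (m:ℕ) + 1 with hda
  set db : ℤ := -(M:ℤ) + (m':ℕ) + 1 with hdb
  have hma : 1 ≤ (m:ℕ) := Nat.one_le_iff_ne_zero.mpr hm
  have hmb : (m':ℕ) ≤ M - 1 := by have := m'.isLt; omega
  have hrange : ∀ p ∈ P,
      ((-(M : ℤ) + 1) ≤ (((p.1-1)*W + p.2 : ℕ) : ℤ) + da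
        ∧ (((p.1-1)*W + p.2 : ℕ) : ℤ) + da ≤ ((K * W : ℕ) : ℤ))
      ∧ ((-(M : ℤ) + 1) ≤ (((p.1-1)*W + p.2 : ℕ) : ℤ) + db
        ∧ (((p.1-1)*W + p.2 : ℕ) : ℤ) + db ≤ ((K * W : ℕ) : ℤ)) := by
    intro p hp
    obtain ⟨ht1, ht2⟩ := hτb p hp
    rw [hda, hdb]
    constructor <;> constructor <;> omega
  set Af : ℕ × ℕ → ↥(Set.Icc (-(M : ℤ) + 1) ((K * W : ℕ) : ℤ)) :=
    fun p => clamp ((((p.1-1)*W + p.2 : ℕ) : ℤ) + da) with hAf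
  set Cf : ℕ × ℕ → ↥(Set.Icc (-(M : ℤ) + 1) ((K * W : ℕ) : ℤ)) :=
    fun p => clamp ((((p.1-1)*W + p.2 : ℕ) : ℤ) + db) with hCf
  have hAval : ∀ p ∈ P, (Af p).1 = (((p.1-1)*W + p.2 : ℕ) : ℤ) + da := by
    intro p hp
    exact hclamp_eq _ ((hrange p hp).1).1 ((hrange p hp).1).2
  have hCval : ∀ p ∈ P, (Cf p).1 = (((p.1-1)*W + p.2 : ℕ) : ℤ) + db := by
    intro p hp
    exact hclamp_eq _ ((hrange p hp).2).1 ((hrange p hp).2).2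
  set f : ↥(Set.Icc (-(M : ℤ) + 1) ((K * W : ℕ) : ℤ)) → Ω → ℝ := fun i => s i.1 with hfdef
  have hfind : iIndepFun f μ := hindep
  have hfm : ∀ i, Measurable (f i) := fun i => hmeas i.1
  have hfb : ∀ i, ∀ᵐ ωb ∂μ, |f i ωb| ≤ B := fun i =>
    hbd i.1 (Set.mem_Icc.mp i.2).1 (Set.mem_Icc.mp i.2).2
  have hfmean : ∀ i, ∫ ωb, f i ωb ∂μ = 0 := fun i =>
    hmean i.1 (Set.mem_Icc.mp i.2).1 (Set.mem_Icc.mp i.2).2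
  set w0 : ℕ × ℕ → ℝ := fun p => β ^ (K - p.1) with hw0
  set wneg : ℕ × ℕ → ℝ := fun p => -(β ^ (K - p.1)) with hwneg
  set N := Nbeta K W β with hN
  have hNpos : 0 < N := by
    rw [hN, Nbeta]
    have h1 : β ^ (K+1) < 1 := pow_lt_one₀ hβ0.le hβ1 (Nat.succ_ne_zero K)
    have h2 : (0:ℝ) < (W:ℝ) := by
      have : 0 < W := hW
      exact_mod_cast this
    exact div_pos (mul_pos h2 (by linarith)) (by linarith)
  have hCeq : ∀ ωb, Cbeta M K W β σR s m m' ωb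
      = (1 / (σR^2 * N)) * ∑ p ∈ P, w0 p * (f (Af p) ωb * f (Cf p) ωb) := by
    intro ωb
    rw [Cbeta, ← hN]
    congr 1
    rw [hP, ← Finset.sum_product']
    refine Finset.sum_congr rfl (fun p hp => ?_)
    have hpP : p ∈ P := by rw [hP]; exact hp
    simp only [covEntry, if_neg hm, if_neg hm']
    have e1 : ((((p.1-1)*W + p.2 : ℕ) : ℤ)) - (M:ℕ) + ((m:ℕ) : ℤ) + 1 = (Af p).1 := by
      rw [hAval p hpP, hda]; ring
    have e2 : ((((p.1-1)*W + p.2 : ℕ) : ℤ)) - (M:ℕ) + ((m':ℕ) : ℤ) + 1 = (Cf p).1 := by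
      rw [hCval p hpP, hdb]; ring
    rw [e1, e2]
  set u2 : ℝ := t * (σR^2 * N) / 2 with hu2
  have hu2pos : 0 < u2 := by rw [hu2]; positivity
  set pr : ℕ × ℕ → Prop := fun p => (((p.1-1)*W + p.2 - 1) / L) % 2 = 0 with hpr
  set Pe := P.filter pr with hPe
  set Po := P.filter (fun p => ¬ pr p) with hPo
  have hwgt0 : ∀ p : ℕ × ℕ, (w0 p * B^2)^2 ≤ β^(K - p.1) * B^4 := by
    intro p
    rw [hw0]
    have hle1 : β^(K - p.1) ≤ 1 := pow_le_one₀ hβ0.le hβ1.le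
    have hge0 : 0 ≤ β^(K - p.1) := pow_nonneg hβ0.le _
    have hx : (β^(K-p.1))^2 ≤ β^(K-p.1) := by
      calc (β^(K-p.1))^2 = β^(K-p.1) * β^(K-p.1) := sq (β^(K-p.1)) ▸ sq (β^(K-p.1)) ▸ (sq (β^(K-p.1))).symm ▸ rfl
        _ ≤ β^(K-p.1) * 1 := mul_le_mul_of_nonneg_left hle1 hge0
        _ = β^(K-p.1) := mul_one _
    calc (β^(K-p.1) * B^2)^2 = (β^(K-p.1))^2 * B^4 := by ring
      _ ≤ β^(K-p.1) * B^4 := mul_le_mul_of_nonneg_right hx (by positivity)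
  have hwgtneg : ∀ p : ℕ × ℕ, (wneg p * B^2)^2 ≤ β^(K - p.1) * B^4 := by
    intro p
    have e : (wneg p * B^2)^2 = (w0 p * B^2)^2 := by rw [hwneg, hw0]; ring
    rw [e]; exact hwgt0 p
  have hclass : ∀ (T : Finset (ℕ × ℕ)) (wgt : ℕ × ℕ → ℝ), T ⊆ P →
      (∀ p ∈ T, ∀ q ∈ T, (q.1-1)*W + q.2 ≠ (p.1-1)*W + p.2 + L) →
      (∀ p : ℕ × ℕ, (wgt p * B^2)^2 ≤ β^(K - p.1) * B^4) →
      (μ {ωb | u2 ≤ ∑ p ∈ T, wgt p * (f (Af p) ωb * f (Cf p) ωb)}).toReal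
        ≤ Real.exp (-(N) * t^2 * σR^4 / (8 * B^4)) := by
    intro T wgt hTP hTpar hwgt
    have hAC : ∀ p ∈ T, Af p ≠ Cf p := by
      intro p hp h
      have hv := congrArg Subtype.val h
      rw [hAval p (hTP hp), hCval p (hTP hp), hda, hdb] at hv
      omega
    have hpair : ∀ p ∈ T, ∀ q ∈ T, p ≠ q →
        Af p ≠ Af q ∧ Af p ≠ Cf q ∧ Cf p ≠ Af q ∧ Cf p ≠ Cf q := by
      intro p hp q hq hpq
      obtain ⟨pm1, pm2, pm3, pm4⟩ := hPmem p (hTP hp)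
      obtain ⟨qm1, qm2, qm3, qm4⟩ := hPmem q (hTP hq)
      have hτne : (p.1-1)*W + p.2 ≠ (q.1-1)*W + q.2 := by
        intro h
        exact hpq (aux_tau_inj hW pm1 pm3 pm4 qm1 qm3 qm4 h)
      refine ⟨?_, ?_, ?_, ?_⟩ <;> intro h <;> have hv := congrArg Subtype.val h
      · rw [hAval p (hTP hp), hAval q (hTP hq), hda] at hv
        exact hτne (by omega)
      · rw [hAval p (hTP hp), hCval q (hTP hq), hda, hdb] at hv
        exact hTpar q hq p hp (by omega)
      · rw [hCval p (hTP hp), hAval q (hTP hq), hda, hdb] at hv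
        exact hTpar p hp q hq (by omega)
      · rw [hCval p (hTP hp), hCval q (hTP hq), hdb] at hv
        exact hτne (by omega)
    have hsum : ∑ p ∈ T, (wgt p * B^2)^2 ≤ N * B^4 := by
      calc ∑ p ∈ T, (wgt p * B^2)^2 ≤ ∑ p ∈ T, β^(K-p.1) * B^4 :=
            Finset.sum_le_sum (fun p _ => hwgt p)
        _ ≤ ∑ p ∈ P, β^(K-p.1) * B^4 :=
            Finset.sum_le_sum_of_subset_of_nonneg hTP (fun p _ _ => by positivity)
        _ ≤ Nbeta K W β * B^4 := by
            rw [hP]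
            exact aux_geom hK hW hβ0 hβ1 (by positivity)
        _ = N * B^4 := by rw [hN]
    have hVpos : 0 < N * B^4 := by positivity
    have hres := aux_classBound f hfind hfm B hB.le hfb hfmean T Af Cf wgt hAC hpair
      (N * B^4) u2 hVpos hu2pos hsum
    refine hres.trans (le_of_eq ?_)
    congr 1
    rw [hu2]
    have hNne : N ≠ 0 := ne_of_gt hNpos
    have hBne : B ≠ 0 := ne_of_gt hB
    field_simp
    ring
  have hparE : ∀ p ∈ Pe, ∀ q ∈ Pe, (q.1-1)*W + q.2 ≠ (p.1-1)*W + p.2 + L := by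
    intro p hp q hq h
    rw [hPe, Finset.mem_filter] at hp hq
    have hp2 := hp.2
    have hq2 := hq.2
    rw [hpr] at hp2 hq2
    exact aux_parity hL0 (hτb p hp.1).1 h (hp2.trans hq2.symm)
  have hparO : ∀ p ∈ Po, ∀ q ∈ Po, (q.1-1)*W + q.2 ≠ (p.1-1)*W + p.2 + L := by
    intro p hp q hq h
    rw [hPo, Finset.mem_filter] at hp hq
    have hp2 := hp.2
    have hq2 := hq.2
    rw [hpr] at hp2 hq2
    exact aux_parity hL0 (hτb p hp.1).1 h (by omega)
  have hb1 := hclass Pe w0 (by rw [hPe]; exact Finset.filter_subset _ _) hparE hwgt0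
  have hb2 := hclass Pe wneg (by rw [hPe]; exact Finset.filter_subset _ _) hparE hwgtneg
  have hb3 := hclass Po w0 (by rw [hPo]; exact Finset.filter_subset _ _) hparO hwgt0
  have hb4 := hclass Po wneg (by rw [hPo]; exact Finset.filter_subset _ _) hparO hwgtneg
  have hsub : {ωb | t < |Cbeta M K W β σR s m m' ωb|} ⊆
      ({ωb | u2 ≤ ∑ p ∈ Pe, w0 p * (f (Af p) ωb * f (Cf p) ωb)} ∪
       {ωb | u2 ≤ ∑ p ∈ Pe, wneg p * (f (Af p) ωb * f (Cf p) ωb)}) ∪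
      ({ωb | u2 ≤ ∑ p ∈ Po, w0 p * (f (Af p) ωb * f (Cf p) ωb)} ∪
       {ωb | u2 ≤ ∑ p ∈ Po, wneg p * (f (Af p) ωb * f (Cf p) ωb)}) := by
    intro ωb hωb
    simp only [Set.mem_setOf_eq] at hωb
    rw [hCeq ωb] at hωb
    have hc0 : (0:ℝ) < σR^2 * N := by positivity
    have habs : t * (σR^2 * N) < |∑ p ∈ P, w0 p * (f (Af p) ωb * f (Cf p) ωb)| := by
      rw [abs_mul, abs_of_pos (by positivity : (0:ℝ) < 1/(σR^2*N))] at hωb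
      have h2 := (mul_lt_mul_iff_of_pos_right hc0).mpr hωb
      calc t * (σR^2*N)
          < (1/(σR^2*N) * |∑ p ∈ P, w0 p * (f (Af p) ωb * f (Cf p) ωb)|) * (σR^2*N) := h2
        _ = |∑ p ∈ P, w0 p * (f (Af p) ωb * f (Cf p) ωb)| := by field_simp
    have hsplit : ∑ p ∈ P, w0 p * (f (Af p) ωb * f (Cf p) ωb)
        = (∑ p ∈ Pe, w0 p * (f (Af p) ωb * f (Cf p) ωb))
          + (∑ p ∈ Po, w0 p * (f (Af p) ωb * f (Cf p) ωb)) := by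
      rw [hPe, hPo]
      exact (Finset.sum_filter_add_sum_filter_not P pr _).symm
    have hnegE : ∑ p ∈ Pe, wneg p * (f (Af p) ωb * f (Cf p) ωb)
        = -(∑ p ∈ Pe, w0 p * (f (Af p) ωb * f (Cf p) ωb)) := by
      rw [← Finset.sum_neg_distrib]
      refine Finset.sum_congr rfl (fun p _ => ?_)
      rw [hwneg, hw0]
      ring
    have hnegO : ∑ p ∈ Po, wneg p * (f (Af p) ωb * f (Cf p) ωb)
        = -(∑ p ∈ Po, w0 p * (f (Af p) ωb * f (Cf p) ωb)) := by
      rw [← Finset.sum_neg_distrib]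
      refine Finset.sum_congr rfl (fun p _ => ?_)
      rw [hwneg, hw0]
      ring
    simp only [Set.mem_union, Set.mem_setOf_eq]
    by_contra hcon
    push_neg at hcon
    obtain ⟨⟨h1, h2⟩, ⟨h3, h4⟩⟩ := hcon
    rw [hnegE] at h2
    rw [hnegO] at h4
    have he : |∑ p ∈ Pe, w0 p * (f (Af p) ωb * f (Cf p) ωb)| < u2 :=
      abs_lt.mpr ⟨by linarith, h1⟩
    have ho : |∑ p ∈ Po, w0 p * (f (Af p) ωb * f (Cf p) ωb)| < u2 :=
      abs_lt.mpr ⟨by linarith, h3⟩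
    have hlt2 : |∑ p ∈ P, w0 p * (f (Af p) ωb * f (Cf p) ωb)| < 2 * u2 := by
      rw [hsplit]
      calc |(∑ p ∈ Pe, w0 p * (f (Af p) ωb * f (Cf p) ωb))
            + (∑ p ∈ Po, w0 p * (f (Af p) ωb * f (Cf p) ωb))|
          ≤ |∑ p ∈ Pe, w0 p * (f (Af p) ωb * f (Cf p) ωb)|
            + |∑ p ∈ Po, w0 p * (f (Af p) ωb * f (Cf p) ωb)| := abs_add_le _ _
        _ < 2 * u2 := by linarith
    rw [hu2] at hlt2
    linarith
  have hmeasle : μ {ωb | t < |Cbeta M K W β σR s m m' ωb|}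
      ≤ (μ {ωb | u2 ≤ ∑ p ∈ Pe, w0 p * (f (Af p) ωb * f (Cf p) ωb)}
          + μ {ωb | u2 ≤ ∑ p ∈ Pe, wneg p * (f (Af p) ωb * f (Cf p) ωb)})
        + (μ {ωb | u2 ≤ ∑ p ∈ Po, w0 p * (f (Af p) ωb * f (Cf p) ωb)}
          + μ {ωb | u2 ≤ ∑ p ∈ Po, wneg p * (f (Af p) ωb * f (Cf p) ωb)}) := by
    calc μ {ωb | t < |Cbeta M K W β σR s m m' ωb|} ≤ μ _ := measure_mono hsub
      _ ≤ _ := by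
        refine (measure_union_le _ _).trans ?_
        exact add_le_add (measure_union_le _ _) (measure_union_le _ _)
  have hne4 : (μ {ωb | u2 ≤ ∑ p ∈ Pe, w0 p * (f (Af p) ωb * f (Cf p) ωb)}
          + μ {ωb | u2 ≤ ∑ p ∈ Pe, wneg p * (f (Af p) ωb * f (Cf p) ωb)})
        + (μ {ωb | u2 ≤ ∑ p ∈ Po, w0 p * (f (Af p) ωb * f (Cf p) ωb)}
          + μ {ωb | u2 ≤ ∑ p ∈ Po, wneg p * (f (Af p) ωb * f (Cf p) ωb)}) ≠ ⊤ := by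
    refine ENNReal.add_ne_top.mpr ⟨?_, ?_⟩ <;>
      exact ENNReal.add_ne_top.mpr ⟨measure_ne_top μ _, measure_ne_top μ _⟩
  have hto := ENNReal.toReal_mono hne4 hmeasle
  rw [ENNReal.toReal_add (ENNReal.add_ne_top.mpr ⟨measure_ne_top μ _, measure_ne_top μ _⟩)
      (ENNReal.add_ne_top.mpr ⟨measure_ne_top μ _, measure_ne_top μ _⟩),
    ENNReal.toReal_add (measure_ne_top μ _) (measure_ne_top μ _),
    ENNReal.toReal_add (measure_ne_top μ _) (measure_ne_top μ _)] at hto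
  refine hto.trans ?_
  linarith [hb1, hb2, hb3, hb4]



/-- tail bound for the off-diagonal entries of the weighted empirical
covariance matrix: for distinct indices `m, m' ∈ {2,…,M}` and every `t > 0`, despite
the dependence induced by the Toeplitz shift structure of the covariates,
`P(|(C_β)_{m,m'}| > t) ≤ 4 exp(−N_β t² σ⁴ / (8B⁴))`. -/
theorem stmt7 {Ω : Type*} {mΩ : MeasurableSpace Ω} (μ : Measure Ω)
    [IsProbabilityMeasure μ]
    (M K W : ℕ) (hM : 2 ≤ M) (hK : 1 ≤ K) (hW : 1 ≤ W)
    (β σR B : ℝ) (hβ0 : 0 < β) (hβ1 : β < 1) (hσ : 0 < σR) (hB : 0 < B)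
    (s : ℤ → Ω → ℝ) (hmeas : ∀ t, Measurable (s t))
    (hindep : iIndepFun
      (fun t : ↥(Set.Icc (-(M : ℤ) + 1) ((K * W : ℕ) : ℤ)) => s t) μ)
    (hmean : ∀ t : ℤ, -(M : ℤ) + 1 ≤ t → t ≤ (K * W : ℕ) → ∫ ωb, s t ωb ∂μ = 0)
    (hvar : ∀ t : ℤ, -(M : ℤ) + 1 ≤ t → t ≤ (K * W : ℕ) →
      ∫ ωb, (s t ωb) ^ 2 ∂μ = σR ^ 2)
    (hbd : ∀ t : ℤ, -(M : ℤ) + 1 ≤ t → t ≤ (K * W : ℕ) → ∀ᵐ ωb ∂μ, |s t ωb| ≤ B) :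
    ∀ m m' : Fin M, (m : ℕ) ≠ 0 → (m' : ℕ) ≠ 0 → m ≠ m' → ∀ t : ℝ, 0 < t →
      (μ {ωb | t < |Cbeta M K W β σR s m m' ωb|}).toReal ≤
        4 * Real.exp (-(Nbeta K W β) * t ^ 2 * σR ^ 4 / (8 * B ^ 4)) := by
  intro m m' hm hm' hne t ht
  have hne' : (m : ℕ) ≠ (m' : ℕ) := fun h => hne (Fin.val_injective h)
  rcases hne'.lt_or_gt with hlt | hlt
  · exact stmt7_aux μ M K W hM hK hW β σR B hβ0 hβ1 hσ hB s hmeas hindep hmean hbd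
      m m' hm hm' hlt t ht
  · have hcomm : {ωb | t < |Cbeta M K W β σR s m m' ωb|}
        = {ωb | t < |Cbeta M K W β σR s m' m ωb|} := by
      ext ωb
      rw [Set.mem_setOf_eq, Set.mem_setOf_eq, Cbeta_comm]
    rw [hcomm]
    exact stmt7_aux μ M K W hM hK hW β σR B hβ0 hβ1 hσ hB s hmeas hindep hmean hbd
      m' m hm' hm hlt t ht
end

section
/- In the point process model, suppose all entries of every covariate vector x_t are bounded by B ≥ 1 in absolute value. Then for every fixed d > 0, with probability at least 1 − 2/M^d, the gradient of the exponentially weighted log-likelihood at the true parameter ω satisfies ‖∇L^β(ω)‖_∞ ≤ B √( 2(d+1) N_β log M ), where N_β := W(1−β^{K+1})/(1−β) and ‖·‖_∞ denotes the entrywise maximum absolute value. -/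
open MeasureTheory ProbabilityTheory
open scoped BigOperators

/-- Entry `k` of the covariate vector `x_t = (1, s_t, s_{t−1}, …, s_{t−M+2})'`:
for `k = 0` it is `1`, and for `k ≥ 1` it is `s_{t−k+1}`. -/
noncomputable def xEntry {Ω : Type*} (M : ℕ) (s : ℤ → Ω → ℝ) (t : ℤ) (k : Fin M)
    (ωb : Ω) : ℝ :=
  if (k : ℕ) = 0 then 1 else s (t - (k : ℕ) + 1) ωb

/-- The conditional spiking probability `λ_tΔ = logistic(⟨ω, x_t⟩)`. -/
noncomputable def lamPP {Ω : Type*} (M : ℕ) (s : ℤ → Ω → ℝ) (ω : Fin M → ℝ) (t : ℤ)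
    (ωb : Ω) : ℝ :=
  logistic (∑ k : Fin M, ω k * xEntry M s t k ωb)

/-- The σ-algebra `σ(s_{−M+1}, …, s_t)` generated by the stimuli up to time `t`. -/
def stimAlg {Ω : Type*} (M : ℕ) (s : ℤ → Ω → ℝ) (t : ℤ) : MeasurableSpace Ω :=
  ⨆ u ∈ Set.Icc (-(M : ℤ) + 1) t, MeasurableSpace.comap (s u) inferInstance

/-- The filtration `F_t := σ(s_{−M+1}, …, s_t) ⊔ σ(n_1, …, n_t)`. -/
def filtr {Ω : Type*} (M : ℕ) (s n : ℤ → Ω → ℝ) (t : ℤ) : MeasurableSpace Ω :=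
  stimAlg M s t ⊔ ⨆ u ∈ Set.Icc (1 : ℤ) t, MeasurableSpace.comap (n u) inferInstance

section Aux

variable {Ω : Type*} {mΩ : MeasurableSpace Ω} {μ : Measure Ω}

lemma my_integrable_of_bound [IsFiniteMeasure μ] {f : Ω → ℝ} (hf : AEStronglyMeasurable f μ)
    (C : ℝ) (h : ∀ᵐ ωb ∂μ, |f ωb| ≤ C) : Integrable f μ :=
  Integrable.mono' (integrable_const C) hf (by simpa [Real.norm_eq_abs] using h)

lemma my_exp_le_cosh {y b : ℝ} (hb : 0 < b) (hy : |y| ≤ b) :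
    Real.exp y ≤ Real.cosh b + (y / b) * Real.sinh b := by
  obtain ⟨h1, h2⟩ := abs_le.1 hy
  have key := convexOn_exp.2 (Set.mem_univ (-b)) (Set.mem_univ b)
    (show (0:ℝ) ≤ (b - y) / (2 * b) by apply div_nonneg <;> linarith)
    (show (0:ℝ) ≤ (b + y) / (2 * b) by apply div_nonneg <;> linarith)
    (by field_simp; ring)
  simp only [smul_eq_mul] at key
  have hpt : (b - y) / (2 * b) * (-b) + (b + y) / (2 * b) * b = y := by
    field_simp
    ring
  rw [hpt] at key
  rw [Real.cosh_eq, Real.sinh_eq]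
  calc Real.exp y ≤ (b - y) / (2 * b) * Real.exp (-b) + (b + y) / (2 * b) * Real.exp b := key
    _ = (Real.exp b + Real.exp (-b)) / 2 + y / b * ((Real.exp b - Real.exp (-b)) / 2) := by
        field_simp
        ring

end Aux

section Azuma

variable {Ω : Type*} {mΩ : MeasurableSpace Ω} (μ : Measure Ω) [IsProbabilityMeasure μ]

lemma my_azuma_mgf (Z : ℕ → Ω → ℝ) (R : ℕ → ℝ) (θ : ℝ) (hmeas : ∀ t, Measurable (Z t)) :
    ∀ T : ℕ,
      (∀ t ∈ Finset.Icc 1 T, 0 < R t) →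
      (∀ t ∈ Finset.Icc 1 T, ∀ᵐ ωb ∂μ, |Z t ωb| ≤ R t) →
      (∀ t ∈ Finset.Icc 1 T, ∀ θ' : ℝ,
        ∫ ωb, Real.exp (θ' * ∑ u ∈ Finset.Icc 1 (t - 1), Z u ωb) * Z t ωb ∂μ = 0) →
      ∫ ωb, Real.exp (θ * ∑ u ∈ Finset.Icc 1 T, Z u ωb) ∂μ ≤
        Real.exp (θ ^ 2 * (∑ u ∈ Finset.Icc 1 T, R u ^ 2) / 2) := by
  rcases eq_or_ne θ 0 with rfl | hθ
  · intro T _ _ _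
    simp
  intro T
  induction T with
  | zero =>
    intro _ _ _
    simp
  | succ T ih =>
    intro hR hbd hmart
    have hsub : ∀ t ∈ Finset.Icc 1 T, t ∈ Finset.Icc 1 (T + 1) := by
      intro t ht; simp only [Finset.mem_Icc] at ht ⊢; omega
    have ih' := ih (fun t ht => hR t (hsub t ht)) (fun t ht => hbd t (hsub t ht))
      (fun t ht => hmart t (hsub t ht))
    set g : Ω → ℝ := fun ωb => Real.exp (θ * ∑ u ∈ Finset.Icc 1 T, Z u ωb) with hg
    have hmemT1 : T + 1 ∈ Finset.Icc 1 (T + 1) := by simp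
    set b : ℝ := |θ| * R (T + 1) with hbdef
    have hb : 0 < b := mul_pos (abs_pos.2 hθ) (hR _ hmemT1)
    have hgmeas : Measurable g :=
      (measurable_const.mul (Finset.measurable_sum _ fun u _ => hmeas u)).exp
    set C : ℝ := Real.exp (|θ| * ∑ u ∈ Finset.Icc 1 T, R u) with hC
    have hbd_all : ∀ᵐ ωb ∂μ, ∀ t ∈ Finset.Icc 1 (T + 1), |Z t ωb| ≤ R t :=
      (Filter.eventually_all_finset _).2 hbd
    -- bound for g
    have hgb : ∀ᵐ ωb ∂μ, |g ωb| ≤ C := by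
      filter_upwards [hbd_all] with ωb h
      rw [hg, abs_of_pos (Real.exp_pos _), hC]
      apply Real.exp_le_exp.2
      calc θ * ∑ u ∈ Finset.Icc 1 T, Z u ωb ≤ |θ * ∑ u ∈ Finset.Icc 1 T, Z u ωb| := le_abs_self _
        _ = |θ| * |∑ u ∈ Finset.Icc 1 T, Z u ωb| := abs_mul _ _
        _ ≤ |θ| * ∑ u ∈ Finset.Icc 1 T, |Z u ωb| := by
            apply mul_le_mul_of_nonneg_left (Finset.abs_sum_le_sum_abs _ _) (abs_nonneg θ)
        _ ≤ |θ| * ∑ u ∈ Finset.Icc 1 T, R u := by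
            apply mul_le_mul_of_nonneg_left _ (abs_nonneg θ)
            exact Finset.sum_le_sum fun u hu => h u (hsub u hu)
    have hig : Integrable g μ := my_integrable_of_bound hgmeas.aestronglyMeasurable C hgb
    have higZ : Integrable (fun ωb => g ωb * Z (T + 1) ωb) μ := by
      apply my_integrable_of_bound ((hgmeas.mul (hmeas (T + 1))).aestronglyMeasurable) (C * R (T + 1))
      filter_upwards [hgb, hbd (T + 1) hmemT1] with ωb h1 h2
      rw [Pi.mul_apply, abs_mul]
      exact mul_le_mul h1 h2 (abs_nonneg _) ((abs_nonneg _).trans h1)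
    have hiL : Integrable (fun ωb => Real.exp (θ * ∑ u ∈ Finset.Icc 1 (T + 1), Z u ωb)) μ := by
      apply my_integrable_of_bound
        ((measurable_const.mul (Finset.measurable_sum _ fun u _ => hmeas u)).exp).aestronglyMeasurable
        (Real.exp (|θ| * ∑ u ∈ Finset.Icc 1 (T + 1), R u))
      filter_upwards [hbd_all] with ωb h
      rw [abs_of_pos (Real.exp_pos _)]
      apply Real.exp_le_exp.2
      calc θ * ∑ u ∈ Finset.Icc 1 (T + 1), Z u ωb
          ≤ |θ| * |∑ u ∈ Finset.Icc 1 (T + 1), Z u ωb| := by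
            rw [← abs_mul]; exact le_abs_self _
        _ ≤ |θ| * ∑ u ∈ Finset.Icc 1 (T + 1), R u := by
            apply mul_le_mul_of_nonneg_left _ (abs_nonneg θ)
            exact (Finset.abs_sum_le_sum_abs _ _).trans (Finset.sum_le_sum h)
    have hiRHS : Integrable
        (fun ωb => Real.cosh b * g ωb + θ * Real.sinh b / b * (g ωb * Z (T + 1) ωb)) μ :=
      (hig.const_mul _).add (higZ.const_mul _)
    -- pointwise bound
    have hstep : ∀ᵐ ωb ∂μ, Real.exp (θ * ∑ u ∈ Finset.Icc 1 (T + 1), Z u ωb) ≤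
        Real.cosh b * g ωb + θ * Real.sinh b / b * (g ωb * Z (T + 1) ωb) := by
      filter_upwards [hbd (T + 1) hmemT1] with ωb hZb
      have hsplit : θ * ∑ u ∈ Finset.Icc 1 (T + 1), Z u ωb =
          θ * ∑ u ∈ Finset.Icc 1 T, Z u ωb + θ * Z (T + 1) ωb := by
        rw [Finset.sum_Icc_succ_top (by omega : 1 ≤ T + 1)]; ring
      rw [hsplit, Real.exp_add]
      have hyb : |θ * Z (T + 1) ωb| ≤ b := by
        rw [abs_mul, hbdef]
        exact mul_le_mul_of_nonneg_left hZb (abs_nonneg θ)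
      have hcb := my_exp_le_cosh hb hyb
      have hgpos : (0:ℝ) < g ωb := Real.exp_pos _
      calc g ωb * Real.exp (θ * Z (T + 1) ωb)
          ≤ g ωb * (Real.cosh b + θ * Z (T + 1) ωb / b * Real.sinh b) := by
            exact mul_le_mul_of_nonneg_left hcb hgpos.le
        _ = Real.cosh b * g ωb + θ * Real.sinh b / b * (g ωb * Z (T + 1) ωb) := by
            field_simp
    have hmart0 : ∫ ωb, g ωb * Z (T + 1) ωb ∂μ = 0 := by
      have := hmart (T + 1) hmemT1 θ
      simpa [Nat.add_sub_cancel] using this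
    calc ∫ ωb, Real.exp (θ * ∑ u ∈ Finset.Icc 1 (T + 1), Z u ωb) ∂μ
        ≤ ∫ ωb, Real.cosh b * g ωb + θ * Real.sinh b / b * (g ωb * Z (T + 1) ωb) ∂μ :=
          integral_mono_ae hiL hiRHS hstep
      _ = Real.cosh b * ∫ ωb, g ωb ∂μ + θ * Real.sinh b / b * ∫ ωb, g ωb * Z (T + 1) ωb ∂μ := by
          rw [integral_add (hig.const_mul _) (higZ.const_mul _), integral_const_mul,
            integral_const_mul]
      _ = Real.cosh b * ∫ ωb, g ωb ∂μ := by rw [hmart0]; ring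
      _ ≤ Real.exp (b ^ 2 / 2) * Real.exp (θ ^ 2 * (∑ u ∈ Finset.Icc 1 T, R u ^ 2) / 2) := by
          apply mul_le_mul (Real.cosh_le_exp_half_sq b) ih'
            (integral_nonneg fun ωb => (Real.exp_pos _).le) (Real.exp_pos _).le
      _ = Real.exp (θ ^ 2 * (∑ u ∈ Finset.Icc 1 (T + 1), R u ^ 2) / 2) := by
          rw [← Real.exp_add, Finset.sum_Icc_succ_top (by omega : 1 ≤ T + 1)]
          congr 1
          rw [hbdef]
          rw [mul_pow, sq_abs]
          ring

end Azuma

section Chernoff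

variable {Ω : Type*} {mΩ : MeasurableSpace Ω} (μ : Measure Ω) [IsProbabilityMeasure μ]

lemma my_azuma_chernoff (Z : ℕ → Ω → ℝ) (R : ℕ → ℝ) (T : ℕ) (hmeas : ∀ t, Measurable (Z t))
    (hR : ∀ t ∈ Finset.Icc 1 T, 0 < R t)
    (hbd : ∀ t ∈ Finset.Icc 1 T, ∀ᵐ ωb ∂μ, |Z t ωb| ≤ R t)
    (hmart : ∀ t ∈ Finset.Icc 1 T, ∀ θ' : ℝ,
      ∫ ωb, Real.exp (θ' * ∑ u ∈ Finset.Icc 1 (t - 1), Z u ωb) * Z t ωb ∂μ = 0)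
    (a : ℝ) (ha : 0 < a) (hV : 0 < ∑ u ∈ Finset.Icc 1 T, R u ^ 2) :
    (μ {ωb | a ≤ ∑ u ∈ Finset.Icc 1 T, Z u ωb}).toReal ≤
      Real.exp (-(a ^ 2 / (2 * ∑ u ∈ Finset.Icc 1 T, R u ^ 2))) := by
  set V : ℝ := ∑ u ∈ Finset.Icc 1 T, R u ^ 2 with hVdef
  set θ : ℝ := a / V with hθdef
  have hθpos : 0 < θ := div_pos ha hV
  have hint : Integrable (fun ωb => Real.exp (θ * ∑ u ∈ Finset.Icc 1 T, Z u ωb)) μ := by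
    apply my_integrable_of_bound
      ((measurable_const.mul (Finset.measurable_sum _ fun u _ => hmeas u)).exp).aestronglyMeasurable
      (Real.exp (|θ| * ∑ u ∈ Finset.Icc 1 T, R u))
    filter_upwards [(Filter.eventually_all_finset _).2 hbd] with ωb h
    rw [abs_of_pos (Real.exp_pos _)]
    apply Real.exp_le_exp.2
    calc θ * ∑ u ∈ Finset.Icc 1 T, Z u ωb ≤ |θ| * |∑ u ∈ Finset.Icc 1 T, Z u ωb| := by
          rw [← abs_mul]; exact le_abs_self _
      _ ≤ |θ| * ∑ u ∈ Finset.Icc 1 T, R u := by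
          apply mul_le_mul_of_nonneg_left _ (abs_nonneg θ)
          exact (Finset.abs_sum_le_sum_abs _ _).trans (Finset.sum_le_sum h)
  have hmgf : mgf (fun ωb => ∑ u ∈ Finset.Icc 1 T, Z u ωb) μ θ ≤ Real.exp (θ ^ 2 * V / 2) :=
    my_azuma_mgf μ Z R θ hmeas T hR hbd hmart
  calc (μ {ωb | a ≤ ∑ u ∈ Finset.Icc 1 T, Z u ωb}).toReal
      ≤ Real.exp (-θ * a) * mgf (fun ωb => ∑ u ∈ Finset.Icc 1 T, Z u ωb) μ θ :=
        measure_ge_le_exp_mul_mgf a hθpos.le hint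
    _ ≤ Real.exp (-θ * a) * Real.exp (θ ^ 2 * V / 2) :=
        mul_le_mul_of_nonneg_left hmgf (Real.exp_pos _).le
    _ = Real.exp (-(a ^ 2 / (2 * V))) := by
        rw [← Real.exp_add]
        congr 1
        rw [hθdef]
        field_simp
        ring

end Chernoff

section Grid

lemma my_sum_grid {M₀ : Type*} [AddCommMonoid M₀] (K W : ℕ) (f : ℕ → M₀) :
    ∑ t ∈ Finset.Icc 1 (K * W), f t =
      ∑ i ∈ Finset.Icc 1 K, ∑ j ∈ Finset.Icc 1 W, f ((i - 1) * W + j) := by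
  induction K with
  | zero => simp
  | succ K ih =>
    rw [Finset.sum_Icc_succ_top (by omega : 1 ≤ K + 1), ← ih]
    have hKW : (K + 1) * W = K * W + W := by ring
    have h1 : Finset.Icc 1 ((K + 1) * W) = Finset.Ioc 0 ((K + 1) * W) := by
      rw [← Finset.Icc_add_one_left_eq_Ioc, zero_add]
    have h2 : Finset.Icc 1 (K * W) = Finset.Ioc 0 (K * W) := by
      rw [← Finset.Icc_add_one_left_eq_Ioc, zero_add]
    rw [h1, h2, ← Finset.sum_Ioc_consecutive f (Nat.zero_le (K * W))
      (by omega : K * W ≤ (K + 1) * W)]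
    congr 1
    have h3 : Finset.Ioc (K * W) ((K + 1) * W) = (Finset.Ioc 0 W).map
        ⟨fun x => K * W + x, add_right_injective (K * W)⟩ := by
      rw [Finset.map_eq_image]
      ext x
      simp only [Finset.mem_Ioc, Finset.mem_image, Function.Embedding.coeFn_mk]
      constructor
      · intro hx
        exact ⟨x - K * W, by omega, by omega⟩
      · rintro ⟨y, hy, rfl⟩
        omega
    rw [h3, Finset.sum_map]
    simp only [Function.Embedding.coeFn_mk]
    rw [← Finset.Icc_add_one_left_eq_Ioc]
    apply Finset.sum_congr (by norm_num)
    intro j _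
    norm_num

lemma my_div_eval {W : ℕ} (i j : ℕ) (hi : 1 ≤ i) (hj1 : 1 ≤ j) (hj2 : j ≤ W) :
    ((i - 1) * W + j - 1) / W = i - 1 := by
  have hW : 0 < W := by omega
  have h : (i - 1) * W + j - 1 = j - 1 + W * (i - 1) := by
    rw [Nat.mul_comm W (i - 1)]; omega
  rw [h, Nat.add_mul_div_left _ _ hW, Nat.div_eq_of_lt (by omega)]
  omega

end Grid

section Model

variable {Ω : Type*} {mΩ : MeasurableSpace Ω}

lemma my_logistic_pos (u : ℝ) : 0 < logistic u := by
  unfold logistic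
  positivity

lemma my_logistic_lt_one (u : ℝ) : logistic u < 1 := by
  unfold logistic
  rw [div_lt_one (by positivity)]
  linarith [Real.exp_pos u]

lemma my_logistic_meas : Measurable logistic := by
  unfold logistic
  exact Real.measurable_exp.div (measurable_const.add Real.measurable_exp)

lemma my_stimAlg_le (M : ℕ) (s : ℤ → Ω → ℝ) (t : ℤ) (hsmeas : ∀ u, Measurable (s u)) :
    stimAlg M s t ≤ mΩ :=
  iSup₂_le fun u _ => measurable_iff_comap_le.1 (hsmeas u)

lemma my_filtr_le (M : ℕ) (s n : ℤ → Ω → ℝ) (t : ℤ) (hsmeas : ∀ u, Measurable (s u))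
    (hnmeas : ∀ u, Measurable (n u)) : filtr M s n t ≤ mΩ :=
  sup_le (my_stimAlg_le M s t hsmeas)
    (iSup₂_le fun u _ => measurable_iff_comap_le.1 (hnmeas u))

lemma my_meas_s_stim (M : ℕ) (s : ℤ → Ω → ℝ) (t u : ℤ) (h1 : -(M : ℤ) + 1 ≤ u) (h2 : u ≤ t) :
    Measurable[stimAlg M s t] (s u) := by
  unfold stimAlg
  exact measurable_iff_comap_le.2
    (le_biSup (fun u => MeasurableSpace.comap (s u) inferInstance) (Set.mem_Icc.2 ⟨h1, h2⟩))

lemma my_meas_n_filtr (M : ℕ) (s n : ℤ → Ω → ℝ) (t u : ℤ) (h1 : 1 ≤ u) (h2 : u ≤ t) :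
    Measurable[filtr M s n t] (n u) := by
  unfold filtr
  exact measurable_iff_comap_le.2
    ((le_biSup (fun u => MeasurableSpace.comap (n u) inferInstance)
      (Set.mem_Icc.2 ⟨h1, h2⟩)).trans le_sup_right)

lemma my_meas_x_stim (M : ℕ) (s : ℤ → Ω → ℝ) (t t' : ℤ) (k : Fin M) (ht : -1 ≤ t)
    (htt' : t ≤ t') : Measurable[stimAlg M s t'] (xEntry M s t k) := by
  unfold xEntry
  by_cases hk : (k : ℕ) = 0
  · simp only [hk, if_true]
    exact measurable_const
  · simp only [hk, if_false]
    have hkM : (k : ℕ) < M := k.isLt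
    apply my_meas_s_stim
    · omega
    · omega

lemma my_meas_lam_stim (M : ℕ) (s : ℤ → Ω → ℝ) (ω : Fin M → ℝ) (t t' : ℤ) (ht : -1 ≤ t)
    (htt' : t ≤ t') : Measurable[stimAlg M s t'] (lamPP M s ω t) := by
  unfold lamPP
  exact my_logistic_meas.comp
    (Finset.measurable_sum _ fun k _ => measurable_const.mul (my_meas_x_stim M s t t' k ht htt'))

end Model

section Mart

variable {Ω : Type*} {mΩ : MeasurableSpace Ω}

lemma my_mart_key (μ : Measure Ω) [IsProbabilityMeasure μ]
    (M : ℕ) (B : ℝ) (hB : 1 ≤ B) (s n : ℤ → Ω → ℝ) (ω : Fin M → ℝ)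
    (hsmeas : ∀ u, Measurable (s u)) (hnmeas : ∀ u, Measurable (n u))
    (hn01 : ∀ t : ℤ, ∀ ωb, n t ωb = 0 ∨ n t ωb = 1)
    (t : ℤ) (ht1 : 1 ≤ t)
    (hmodel : μ[n t | filtr M s n (t - 1) ⊔ stimAlg M s t] =ᵐ[μ] fun ωb => lamPP M s ω t ωb)
    (m : Fin M)
    (hxbd : ∀ᵐ ωb ∂μ, |xEntry M s t m ωb| ≤ B)
    (g : Ω → ℝ) (hgm : StronglyMeasurable[filtr M s n (t - 1)] g)
    (C : ℝ) (hC : 0 ≤ C) (hgb : ∀ᵐ ωb ∂μ, |g ωb| ≤ C) :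
    ∫ ωb, g ωb * (xEntry M s t m ωb * (n t ωb - lamPP M s ω t ωb)) ∂μ = 0 := by
  have hGle : filtr M s n (t - 1) ⊔ stimAlg M s t ≤ mΩ :=
    sup_le (my_filtr_le M s n (t - 1) hsmeas hnmeas) (my_stimAlg_le M s t hsmeas)
  haveI : SigmaFinite (μ.trim hGle) := by
    have : IsFiniteMeasure (μ.trim hGle) := isFiniteMeasure_trim hGle
    infer_instance
  set X : Ω → ℝ := xEntry M s t m with hX
  set lam : Ω → ℝ := lamPP M s ω t with hlam
  have hXG : Measurable[filtr M s n (t - 1) ⊔ stimAlg M s t] X :=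
    (my_meas_x_stim M s t t m (by omega) le_rfl).mono le_sup_right le_rfl
  have hlamG : Measurable[filtr M s n (t - 1) ⊔ stimAlg M s t] lam :=
    (my_meas_lam_stim M s ω t t (by omega) le_rfl).mono le_sup_right le_rfl
  have hXmeas : Measurable[mΩ] X := hXG.mono hGle le_rfl
  have hlammeas : Measurable[mΩ] lam := hlamG.mono hGle le_rfl
  have hgmeas : Measurable[mΩ] g :=
    hgm.measurable.mono (my_filtr_le M s n (t - 1) hsmeas hnmeas) le_rfl
  have hfG : StronglyMeasurable[filtr M s n (t - 1) ⊔ stimAlg M s t]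
      (fun ωb => g ωb * X ωb) := by
    have h := StronglyMeasurable.mul
      (hgm.mono (le_sup_left : filtr M s n (t - 1) ≤ filtr M s n (t - 1) ⊔ stimAlg M s t))
      hXG.stronglyMeasurable
    exact h
  have hfb : ∀ᵐ ωb ∂μ, ‖g ωb * X ωb‖ ≤ C * B := by
    filter_upwards [hgb, hxbd] with ωb h1 h2
    rw [Real.norm_eq_abs, abs_mul]
    exact mul_le_mul h1 h2 (abs_nonneg _) hC
  have hnbd : ∀ ωb, |n t ωb| ≤ 1 := fun ωb => by
    rcases hn01 t ωb with h | h <;> simp [h]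
  have hlambd : ∀ ωb, |lam ωb| ≤ 1 := fun ωb => by
    rw [hlam]
    unfold lamPP
    rw [abs_of_pos (my_logistic_pos _)]
    exact (my_logistic_lt_one _).le
  have hnint : Integrable (n t) μ :=
    my_integrable_of_bound (hnmeas t).aestronglyMeasurable 1 (Filter.Eventually.of_forall hnbd)
  have hfnint : Integrable (fun ωb => g ωb * X ωb * n t ωb) μ := by
    apply my_integrable_of_bound ((hgmeas.mul hXmeas).mul (hnmeas t)).aestronglyMeasurable
      (C * B * 1)
    filter_upwards [hfb] with ωb h1
    rw [Pi.mul_apply, Pi.mul_apply, abs_mul]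
    exact mul_le_mul (by simpa only [Real.norm_eq_abs] using h1) (hnbd ωb) (abs_nonneg _)
      (by positivity)
  have hflint : Integrable (fun ωb => g ωb * X ωb * lam ωb) μ := by
    apply my_integrable_of_bound ((hgmeas.mul hXmeas).mul hlammeas).aestronglyMeasurable
      (C * B * 1)
    filter_upwards [hfb] with ωb h1
    rw [Pi.mul_apply, Pi.mul_apply, abs_mul]
    exact mul_le_mul (by simpa only [Real.norm_eq_abs] using h1) (hlambd ωb) (abs_nonneg _)
      (by positivity)
  have hpull : μ[(fun ωb => g ωb * X ωb) * n t | filtr M s n (t - 1) ⊔ stimAlg M s t] =ᵐ[μ]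
      (fun ωb => g ωb * X ωb) * μ[n t | filtr M s n (t - 1) ⊔ stimAlg M s t] :=
    condExp_stronglyMeasurable_mul_of_bound hGle hfG hnint (C * B) hfb
  have key : ∫ ωb, g ωb * X ωb * n t ωb ∂μ = ∫ ωb, g ωb * X ωb * lam ωb ∂μ := by
    have h1 : ∫ ωb, g ωb * X ωb * n t ωb ∂μ =
        ∫ ωb, (μ[(fun ωb => g ωb * X ωb) * n t | filtr M s n (t - 1) ⊔ stimAlg M s t]) ωb ∂μ :=
      (integral_condExp hGle).symm
    have h2 : ∫ ωb, (μ[(fun ωb => g ωb * X ωb) * n t |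
          filtr M s n (t - 1) ⊔ stimAlg M s t]) ωb ∂μ =
        ∫ ωb, g ωb * X ωb * (μ[n t | filtr M s n (t - 1) ⊔ stimAlg M s t]) ωb ∂μ :=
      integral_congr_ae (hpull.mono fun ωb h => by simpa using h)
    have h3 : ∫ ωb, g ωb * X ωb * (μ[n t | filtr M s n (t - 1) ⊔ stimAlg M s t]) ωb ∂μ =
        ∫ ωb, g ωb * X ωb * lam ωb ∂μ := by
      apply integral_congr_ae
      filter_upwards [hmodel] with ωb h
      rw [h]
    rw [h1, h2, h3]
  have hsplit : ∀ ωb, g ωb * (X ωb * (n t ωb - lam ωb)) =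
      g ωb * X ωb * n t ωb - g ωb * X ωb * lam ωb := by
    intro ωb; ring
  rw [integral_congr_ae (Filter.Eventually.of_forall hsplit)]
  rw [integral_sub hfnint hflint, key, sub_self]

end Mart

/-- in the point process model, if all entries of every covariate
vector are bounded by `B ≥ 1` in absolute value, then for every fixed `d > 0`, with
probability at least `1 − 2/M^d`, the gradient of the exponentially weighted
log-likelihood at the true parameter `ω` satisfies
`‖∇L^β(ω)‖_∞ ≤ B√(2(d+1) N_β log M)`. -/
theorem stmt12 {Ω : Type*} {mΩ : MeasurableSpace Ω} (μ : Measure Ω)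
    [IsProbabilityMeasure μ]
    (M K W : ℕ) (hM : 2 ≤ M) (hK : 1 ≤ K) (hW : 1 ≤ W)
    (β : ℝ) (hβ0 : 0 < β) (hβ1 : β < 1) (σR B : ℝ) (hσ : 0 < σR) (hB : 1 ≤ B)
    (s : ℤ → Ω → ℝ) (n : ℤ → Ω → ℝ) (ω : Fin M → ℝ)
    (hsmeas : ∀ t, Measurable (s t)) (hnmeas : ∀ t, Measurable (n t))
    (hindep : iIndepFun
      (fun t : ↥(Set.Icc (-(M : ℤ) + 1) ((K * W : ℕ) : ℤ)) => s t) μ)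
    (hmean : ∀ t : ℤ, -(M : ℤ) + 1 ≤ t → t ≤ (K * W : ℕ) → ∫ ωb, s t ωb ∂μ = 0)
    (hvar : ∀ t : ℤ, -(M : ℤ) + 1 ≤ t → t ≤ (K * W : ℕ) →
      ∫ ωb, (s t ωb) ^ 2 ∂μ = σR ^ 2)
    (hbd : ∀ t : ℤ, -(M : ℤ) + 1 ≤ t → t ≤ (K * W : ℕ) → ∀ᵐ ωb ∂μ, |s t ωb| ≤ B)
    (hn01 : ∀ t : ℤ, ∀ ωb, n t ωb = 0 ∨ n t ωb = 1)
    (hmodel : ∀ t : ℤ, 1 ≤ t → t ≤ (K * W : ℕ) →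
      μ[n t | filtr M s n (t - 1) ⊔ stimAlg M s t] =ᵐ[μ]
        fun ωb => lamPP M s ω t ωb)
    (d : ℝ) (hd : 0 < d) :
    1 - 2 / (M : ℝ) ^ d ≤
      (μ {ωb | ∀ m : Fin M,
        |∑ i ∈ Finset.Icc 1 K, ∑ j ∈ Finset.Icc 1 W,
          β ^ (K - i) * (xEntry M s (((i - 1) * W + j : ℕ) : ℤ) m ωb *
            (n (((i - 1) * W + j : ℕ) : ℤ) ωb -
              lamPP M s ω (((i - 1) * W + j : ℕ) : ℤ) ωb))| ≤
          B * Real.sqrt (2 * (d + 1) * Nbeta K W β * Real.log M)}).toReal := by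
  have hB0 : (0:ℝ) < B := by linarith
  have hM0 : (0:ℝ) < (M:ℝ) := by exact_mod_cast (by omega : 0 < M)
  have hM1 : (1:ℝ) < (M:ℝ) := by exact_mod_cast (by omega : 1 < M)
  have hlogM : 0 < Real.log M := Real.log_pos hM1
  have hden : (0:ℝ) < 1 - β := by linarith
  have hNpos : 0 < Nbeta K W β := by
    unfold Nbeta
    have h1 : (0:ℝ) < (W:ℝ) := by exact_mod_cast (by omega : 0 < W)
    have h2 : β ^ (K+1) < 1 := pow_lt_one₀ hβ0.le hβ1 (by omega)
    apply div_pos (by nlinarith) hden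
  have hKW1 : 1 ≤ K * W := Nat.mul_pos hK hW
  -- abbreviations
  set cf : ℕ → ℝ := fun t => β ^ (K - 1 - (t - 1) / W) with hcf
  have hcfpos : ∀ t, 0 < cf t := fun t => pow_pos hβ0 _
  have hcfle1 : ∀ t, cf t ≤ 1 := fun t => pow_le_one₀ hβ0.le hβ1.le
  set aB : ℝ := B * Real.sqrt (2 * (d + 1) * Nbeta K W β * Real.log M) with haB
  have harg : 0 < 2 * (d + 1) * Nbeta K W β * Real.log M := by positivity
  have haBpos : 0 < aB := mul_pos hB0 (Real.sqrt_pos.2 harg)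
  have ha2 : aB ^ 2 = B ^ 2 * (2 * (d + 1) * Nbeta K W β * Real.log M) := by
    rw [haB, mul_pow, Real.sq_sqrt harg.le]
  -- measurability of components
  have hxmeas : ∀ (t : ℤ) (k : Fin M), Measurable (xEntry M s t k) := by
    intro t k
    unfold xEntry
    by_cases h : (k : ℕ) = 0
    · simp only [h, if_true]; exact measurable_const
    · simp only [h, if_false]; exact hsmeas _
  have hlmeas : ∀ t : ℤ, Measurable (lamPP M s ω t) := fun t => by
    unfold lamPP
    exact my_logistic_meas.comp
      (Finset.measurable_sum _ fun k _ => measurable_const.mul (hxmeas t k))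
  have hZmeas : ∀ (m : Fin M) (t : ℕ), Measurable (fun ωb =>
      xEntry M s (t : ℤ) m ωb * (n (t : ℤ) ωb - lamPP M s ω (t : ℤ) ωb)) :=
    fun m t => (hxmeas _ _).mul ((hnmeas _).sub (hlmeas _))
  -- a.e. bounds
  have hxbd : ∀ t : ℤ, 1 ≤ t → t ≤ (K * W : ℕ) → ∀ m : Fin M,
      ∀ᵐ ωb ∂μ, |xEntry M s t m ωb| ≤ B := by
    intro t h1 h2 m
    by_cases h : (m : ℕ) = 0
    · refine Filter.Eventually.of_forall fun ωb => ?_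
      unfold xEntry
      simp only [h, if_true, abs_one]
      exact hB
    · have hmM : ((m : ℕ) : ℤ) < (M : ℤ) := by exact_mod_cast m.isLt
      have hm1 : (1 : ℤ) ≤ (m : ℕ) := by
        have : 0 < (m : ℕ) := Nat.pos_of_ne_zero h
        exact_mod_cast this
      filter_upwards [hbd (t - (m : ℕ) + 1) (by omega) (by omega)] with ωb hw
      unfold xEntry
      simp only [h, if_false]
      exact hw
  have hnlbd : ∀ (t : ℤ) (ωb : Ω), |n t ωb - lamPP M s ω t ωb| ≤ 1 := by
    intro t ωb
    have h1 : 0 < lamPP M s ω t ωb := my_logistic_pos _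
    have h2 : lamPP M s ω t ωb < 1 := my_logistic_lt_one _
    rcases hn01 t ωb with h | h <;> rw [h] <;>
      exact abs_le.2 ⟨by linarith, by linarith⟩
  have hYbd : ∀ (t : ℕ), 1 ≤ t → t ≤ K * W → ∀ m : Fin M, ∀ᵐ ωb ∂μ,
      |xEntry M s (t : ℤ) m ωb * (n (t : ℤ) ωb - lamPP M s ω (t : ℤ) ωb)| ≤ B := by
    intro t h1 h2 m
    filter_upwards [hxbd (t : ℤ) (by exact_mod_cast h1) (by exact_mod_cast h2) m] with ωb hx
    rw [abs_mul]
    calc |xEntry M s (t : ℤ) m ωb| * |n (t : ℤ) ωb - lamPP M s ω (t : ℤ) ωb|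
        ≤ B * 1 := mul_le_mul hx (hnlbd _ _) (abs_nonneg _) hB0.le
      _ = B := mul_one B
  -- the martingale property
  have hmart_gen : ∀ (m : Fin M) (c' : ℕ → ℝ) (t : ℕ), t ∈ Finset.Icc 1 (K * W) →
      ∀ θ' : ℝ, ∫ ωb, Real.exp (θ' * ∑ u ∈ Finset.Icc 1 (t - 1),
          c' u * (xEntry M s (u : ℤ) m ωb * (n (u : ℤ) ωb - lamPP M s ω (u : ℤ) ωb))) *
        (c' t * (xEntry M s (t : ℤ) m ωb * (n (t : ℤ) ωb - lamPP M s ω (t : ℤ) ωb))) ∂μ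
        = 0 := by
    intro m c' t ht θ'
    rw [Finset.mem_Icc] at ht
    have ht1 : (1 : ℤ) ≤ (t : ℤ) := by exact_mod_cast ht.1
    have ht2 : (t : ℤ) ≤ ((K * W : ℕ) : ℤ) := by exact_mod_cast ht.2
    have hss : stimAlg M s ((t : ℤ) - 1) ≤ filtr M s n ((t : ℤ) - 1) := by
      unfold filtr; exact le_sup_left
    have huc : ∀ u ∈ Finset.Icc 1 (t - 1), (1:ℤ) ≤ (u:ℤ) ∧ (u:ℤ) ≤ (t:ℤ) - 1 := by
      intro u hu
      rw [Finset.mem_Icc] at hu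
      constructor
      · exact_mod_cast hu.1
      · have h1 : (u:ℤ) ≤ ((t:ℕ) - 1 : ℕ) := by exact_mod_cast hu.2
        have h2 : (((t:ℕ) - 1 : ℕ) : ℤ) = (t:ℤ) - 1 := by omega
        omega
    have hgm : StronglyMeasurable[filtr M s n ((t : ℤ) - 1)] (fun ωb =>
        Real.exp (θ' * ∑ u ∈ Finset.Icc 1 (t - 1),
          c' u * (xEntry M s (u : ℤ) m ωb * (n (u : ℤ) ωb - lamPP M s ω (u : ℤ) ωb)))) := by
      apply Measurable.stronglyMeasurable
      apply Measurable.exp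
      apply Measurable.mul measurable_const
      apply Finset.measurable_sum
      intro u hu
      obtain ⟨hu1, hu2⟩ := huc u hu
      apply Measurable.mul measurable_const
      exact ((my_meas_x_stim M s (u:ℤ) ((t:ℤ)-1) m (by omega) (by omega)).mono hss le_rfl).mul
        (((my_meas_n_filtr M s n ((t:ℤ)-1) (u:ℤ) hu1 hu2)).sub
          ((my_meas_lam_stim M s ω (u:ℤ) ((t:ℤ)-1) (by omega) (by omega)).mono hss le_rfl))
    have hgb : ∀ᵐ ωb ∂μ, |Real.exp (θ' * ∑ u ∈ Finset.Icc 1 (t - 1),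
        c' u * (xEntry M s (u : ℤ) m ωb * (n (u : ℤ) ωb - lamPP M s ω (u : ℤ) ωb)))| ≤
          Real.exp (|θ'| * ∑ u ∈ Finset.Icc 1 (t - 1), |c' u| * B) := by
      have hae : ∀ᵐ ωb ∂μ, ∀ u ∈ Finset.Icc 1 (t - 1),
          |xEntry M s (u : ℤ) m ωb * (n (u : ℤ) ωb - lamPP M s ω (u : ℤ) ωb)| ≤ B := by
        apply (Filter.eventually_all_finset _).2
        intro u hu
        rw [Finset.mem_Icc] at hu
        exact hYbd u hu.1 (by omega) m
      filter_upwards [hae] with ωb h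
      rw [abs_of_pos (Real.exp_pos _)]
      apply Real.exp_le_exp.2
      calc θ' * ∑ u ∈ Finset.Icc 1 (t - 1),
            c' u * (xEntry M s (u : ℤ) m ωb * (n (u : ℤ) ωb - lamPP M s ω (u : ℤ) ωb))
          ≤ |θ'| * |∑ u ∈ Finset.Icc 1 (t - 1),
            c' u * (xEntry M s (u : ℤ) m ωb * (n (u : ℤ) ωb - lamPP M s ω (u : ℤ) ωb))| := by
            rw [← abs_mul]; exact le_abs_self _
        _ ≤ |θ'| * ∑ u ∈ Finset.Icc 1 (t - 1), |c' u| * B := by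
            apply mul_le_mul_of_nonneg_left _ (abs_nonneg θ')
            refine (Finset.abs_sum_le_sum_abs _ _).trans (Finset.sum_le_sum fun u hu => ?_)
            rw [abs_mul]
            exact mul_le_mul_of_nonneg_left (h u hu) (abs_nonneg _)
    have hkey := my_mart_key μ M B hB s n ω hsmeas hnmeas hn01 (t : ℤ) ht1
      (hmodel (t : ℤ) ht1 ht2) m (hxbd (t : ℤ) ht1 ht2 m)
      (fun ωb => Real.exp (θ' * ∑ u ∈ Finset.Icc 1 (t - 1),
        c' u * (xEntry M s (u : ℤ) m ωb * (n (u : ℤ) ωb - lamPP M s ω (u : ℤ) ωb))))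
      hgm _ (Real.exp_nonneg _) hgb
    have hre : ∀ ωb : Ω, Real.exp (θ' * ∑ u ∈ Finset.Icc 1 (t - 1),
          c' u * (xEntry M s (u : ℤ) m ωb * (n (u : ℤ) ωb - lamPP M s ω (u : ℤ) ωb))) *
        (c' t * (xEntry M s (t : ℤ) m ωb * (n (t : ℤ) ωb - lamPP M s ω (t : ℤ) ωb))) =
        c' t * (Real.exp (θ' * ∑ u ∈ Finset.Icc 1 (t - 1),
          c' u * (xEntry M s (u : ℤ) m ωb * (n (u : ℤ) ωb - lamPP M s ω (u : ℤ) ωb))) *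
        (xEntry M s (t : ℤ) m ωb * (n (t : ℤ) ωb - lamPP M s ω (t : ℤ) ωb))) := by
      intro ωb; ring
    rw [integral_congr_ae (Filter.Eventually.of_forall hre), integral_const_mul, hkey, mul_zero]
  -- variance bound
  have hVpos : 0 < ∑ u ∈ Finset.Icc 1 (K * W), (cf u * B) ^ 2 := by
    apply Finset.sum_pos
    · intro u hu
      have := hcfpos u
      positivity
    · exact ⟨1, Finset.mem_Icc.2 ⟨le_rfl, hKW1⟩⟩
  have hcf_eval : ∀ i ∈ Finset.Icc 1 K, ∀ j ∈ Finset.Icc 1 W,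
      cf ((i - 1) * W + j) = β ^ (K - i) := by
    intro i hi j hj
    rw [Finset.mem_Icc] at hi hj
    rw [hcf]
    show β ^ (K - 1 - ((i - 1) * W + j - 1) / W) = β ^ (K - i)
    rw [my_div_eval i j hi.1 hj.1 hj.2]
    congr 1
    omega
  have hgeom : ∑ i ∈ Finset.Icc 1 K, β ^ (K - i) = (1 - β ^ K) / (1 - β) := by
    have hre : ∑ i ∈ Finset.Icc 1 K, β ^ (K - i) = ∑ r ∈ Finset.range K, β ^ r := by
      apply Finset.sum_nbij' (fun i => K - i) (fun r => K - r)
      · intro a ha; rw [Finset.mem_Icc] at ha; rw [Finset.mem_range]; omega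
      · intro a ha; rw [Finset.mem_range] at ha; rw [Finset.mem_Icc]; omega
      · intro a ha; rw [Finset.mem_Icc] at ha; omega
      · intro a ha; rw [Finset.mem_range] at ha; omega
      · intro a _; rfl
    rw [hre, geom_sum_eq hβ1.ne K]
    rw [← neg_div_neg_eq]
    ring_nf
  have hVle : ∑ u ∈ Finset.Icc 1 (K * W), (cf u * B) ^ 2 ≤ B ^ 2 * Nbeta K W β := by
    rw [my_sum_grid K W (fun u => (cf u * B) ^ 2)]
    have hstep1 : ∑ i ∈ Finset.Icc 1 K, ∑ j ∈ Finset.Icc 1 W, (cf ((i - 1) * W + j) * B) ^ 2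
        = ∑ i ∈ Finset.Icc 1 K, (W : ℝ) * (β ^ (K - i) * B) ^ 2 := by
      apply Finset.sum_congr rfl
      intro i hi
      rw [Finset.sum_congr rfl (fun j hj => by rw [hcf_eval i hi j hj])]
      rw [Finset.sum_const, Nat.card_Icc, nsmul_eq_mul]
      norm_num
    rw [hstep1]
    have hstep2 : ∑ i ∈ Finset.Icc 1 K, (W : ℝ) * (β ^ (K - i) * B) ^ 2 ≤
        ∑ i ∈ Finset.Icc 1 K, (W : ℝ) * B ^ 2 * β ^ (K - i) := by
      apply Finset.sum_le_sum
      intro i _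
      have hp1 : β ^ (K - i) ≤ 1 := pow_le_one₀ hβ0.le hβ1.le
      have hp0 : 0 < β ^ (K - i) := pow_pos hβ0 _
      have hW0 : (0:ℝ) ≤ (W:ℝ) := by positivity
      have hsq : (β ^ (K - i)) ^ 2 ≤ β ^ (K - i) := by nlinarith
      calc (W : ℝ) * (β ^ (K - i) * B) ^ 2 = (W : ℝ) * B ^ 2 * (β ^ (K - i)) ^ 2 := by ring
        _ ≤ (W : ℝ) * B ^ 2 * β ^ (K - i) := by
            apply mul_le_mul_of_nonneg_left hsq (by positivity)
    refine hstep2.trans ?_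
    rw [← Finset.mul_sum, hgeom]
    unfold Nbeta
    have hp : β ^ (K + 1) ≤ β ^ K := pow_le_pow_of_le_one hβ0.le hβ1.le (Nat.le_succ K)
    have hfrac : (1 - β ^ K) / (1 - β) ≤ (1 - β ^ (K + 1)) / (1 - β) := by
      apply (div_le_div_iff_of_pos_right hden).2
      linarith
    calc (W : ℝ) * B ^ 2 * ((1 - β ^ K) / (1 - β))
        ≤ (W : ℝ) * B ^ 2 * ((1 - β ^ (K + 1)) / (1 - β)) := by
          apply mul_le_mul_of_nonneg_left hfrac (by positivity)
      _ = B ^ 2 * ((W : ℝ) * (1 - β ^ (K + 1)) / (1 - β)) := by ring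
  -- tail bound constant
  set P : ℝ := Real.exp (-((d + 1) * Real.log M)) with hP
  have htail : Real.exp (-(aB ^ 2 / (2 * ∑ u ∈ Finset.Icc 1 (K * W), (cf u * B) ^ 2))) ≤ P := by
    rw [hP]
    apply Real.exp_le_exp.2
    apply neg_le_neg
    rw [le_div_iff₀ (by positivity)]
    calc (d + 1) * Real.log M * (2 * ∑ u ∈ Finset.Icc 1 (K * W), (cf u * B) ^ 2)
        ≤ (d + 1) * Real.log M * (2 * (B ^ 2 * Nbeta K W β)) := by
          apply mul_le_mul_of_nonneg_left (by linarith) (by positivity)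
      _ = aB ^ 2 := by rw [ha2]; ring
  -- Chernoff bounds for each coordinate and sign
  have hbdZ : ∀ t ∈ Finset.Icc 1 (K * W), ∀ m : Fin M, ∀ᵐ ωb ∂μ,
      |cf t * (xEntry M s (t : ℤ) m ωb * (n (t : ℤ) ωb - lamPP M s ω (t : ℤ) ωb))| ≤
        cf t * B := by
    intro t ht m
    rw [Finset.mem_Icc] at ht
    filter_upwards [hYbd t ht.1 ht.2 m] with ωb h
    rw [abs_mul, abs_of_pos (hcfpos t)]
    exact mul_le_mul_of_nonneg_left h (hcfpos t).le
  have hpos : ∀ m : Fin M, (μ {ωb | aB ≤ ∑ u ∈ Finset.Icc 1 (K * W),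
      cf u * (xEntry M s (u : ℤ) m ωb * (n (u : ℤ) ωb - lamPP M s ω (u : ℤ) ωb))}).toReal
      ≤ P := by
    intro m
    refine le_trans ?_ htail
    exact my_azuma_chernoff μ
      (fun u ωb => cf u * (xEntry M s (u : ℤ) m ωb * (n (u : ℤ) ωb - lamPP M s ω (u : ℤ) ωb)))
      (fun u => cf u * B) (K * W)
      (fun u => measurable_const.mul (hZmeas m u))
      (fun u _ => mul_pos (hcfpos u) hB0)
      (fun u hu => hbdZ u hu m)
      (fun t ht θ' => hmart_gen m cf t ht θ')
      aB haBpos hVpos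
  have hneg : ∀ m : Fin M, (μ {ωb | aB ≤ ∑ u ∈ Finset.Icc 1 (K * W),
      -cf u * (xEntry M s (u : ℤ) m ωb * (n (u : ℤ) ωb - lamPP M s ω (u : ℤ) ωb))}).toReal
      ≤ P := by
    intro m
    have hVeq : ∑ u ∈ Finset.Icc 1 (K * W), (cf u * B) ^ 2 =
        ∑ u ∈ Finset.Icc 1 (K * W), (-cf u * B) ^ 2 := by
      apply Finset.sum_congr rfl
      intro u _
      ring
    refine le_trans ?_ htail
    have hch := my_azuma_chernoff μ
      (fun u ωb => -cf u * (xEntry M s (u : ℤ) m ωb * (n (u : ℤ) ωb - lamPP M s ω (u : ℤ) ωb)))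
      (fun u => cf u * B) (K * W)
      (fun u => measurable_const.mul (hZmeas m u))
      (fun u _ => mul_pos (hcfpos u) hB0)
      (fun u hu => by
        filter_upwards [hbdZ u hu m] with ωb h
        calc |(-cf u) * (xEntry M s (u : ℤ) m ωb * (n (u : ℤ) ωb - lamPP M s ω (u : ℤ) ωb))|
            = |cf u * (xEntry M s (u : ℤ) m ωb * (n (u : ℤ) ωb - lamPP M s ω (u : ℤ) ωb))| := by
              rw [neg_mul, abs_neg]
          _ ≤ cf u * B := h)
      (fun t ht θ' => hmart_gen m (fun u => -cf u) t ht θ')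
      aB haBpos hVpos
    exact hch
  -- rewrite the double sum as a single sum
  have hsumeq : ∀ (m : Fin M) (ωb : Ω),
      ∑ i ∈ Finset.Icc 1 K, ∑ j ∈ Finset.Icc 1 W,
        β ^ (K - i) * (xEntry M s (((i - 1) * W + j : ℕ) : ℤ) m ωb *
          (n (((i - 1) * W + j : ℕ) : ℤ) ωb - lamPP M s ω (((i - 1) * W + j : ℕ) : ℤ) ωb)) =
      ∑ u ∈ Finset.Icc 1 (K * W),
        cf u * (xEntry M s (u : ℤ) m ωb * (n (u : ℤ) ωb - lamPP M s ω (u : ℤ) ωb)) := by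
    intro m ωb
    rw [my_sum_grid K W (fun u =>
      cf u * (xEntry M s (u : ℤ) m ωb * (n (u : ℤ) ωb - lamPP M s ω (u : ℤ) ωb)))]
    apply Finset.sum_congr rfl
    intro i hi
    apply Finset.sum_congr rfl
    intro j hj
    rw [hcf_eval i hi j hj]
  have hEeq : {ωb | ∀ m : Fin M,
      |∑ i ∈ Finset.Icc 1 K, ∑ j ∈ Finset.Icc 1 W,
        β ^ (K - i) * (xEntry M s (((i - 1) * W + j : ℕ) : ℤ) m ωb *
          (n (((i - 1) * W + j : ℕ) : ℤ) ωb -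
            lamPP M s ω (((i - 1) * W + j : ℕ) : ℤ) ωb))| ≤ aB} =
      {ωb | ∀ m : Fin M, |∑ u ∈ Finset.Icc 1 (K * W),
        cf u * (xEntry M s (u : ℤ) m ωb * (n (u : ℤ) ωb - lamPP M s ω (u : ℤ) ωb))| ≤ aB} := by
    ext ωb
    simp only [Set.mem_setOf_eq, hsumeq]
  rw [hEeq]
  -- measurability of the event
  have hSmeas : ∀ m : Fin M, Measurable (fun ωb => ∑ u ∈ Finset.Icc 1 (K * W),
      cf u * (xEntry M s (u : ℤ) m ωb * (n (u : ℤ) ωb - lamPP M s ω (u : ℤ) ωb))) :=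
    fun m => Finset.measurable_sum _ fun u _ => measurable_const.mul (hZmeas m u)
  have hEmeas : MeasurableSet {ωb | ∀ m : Fin M, |∑ u ∈ Finset.Icc 1 (K * W),
      cf u * (xEntry M s (u : ℤ) m ωb * (n (u : ℤ) ωb - lamPP M s ω (u : ℤ) ωb))| ≤ aB} := by
    rw [Set.setOf_forall]
    exact MeasurableSet.iInter fun m => measurableSet_le (hSmeas m).abs measurable_const
  -- union bound on the complement
  have hsub : {ωb | ∀ m : Fin M, |∑ u ∈ Finset.Icc 1 (K * W),
      cf u * (xEntry M s (u : ℤ) m ωb * (n (u : ℤ) ωb - lamPP M s ω (u : ℤ) ωb))| ≤ aB}ᶜ ⊆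
      ⋃ m : Fin M, ({ωb | aB ≤ ∑ u ∈ Finset.Icc 1 (K * W),
        cf u * (xEntry M s (u : ℤ) m ωb * (n (u : ℤ) ωb - lamPP M s ω (u : ℤ) ωb))} ∪
        {ωb | aB ≤ ∑ u ∈ Finset.Icc 1 (K * W),
        -cf u * (xEntry M s (u : ℤ) m ωb * (n (u : ℤ) ωb - lamPP M s ω (u : ℤ) ωb))}) := by
    intro ωb hωb
    simp only [Set.mem_compl_iff, Set.mem_setOf_eq, not_forall, not_le] at hωb
    obtain ⟨m, hm⟩ := hωb
    refine Set.mem_iUnion.2 ⟨m, ?_⟩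
    have hnegsum : ∑ u ∈ Finset.Icc 1 (K * W),
        -cf u * (xEntry M s (u : ℤ) m ωb * (n (u : ℤ) ωb - lamPP M s ω (u : ℤ) ωb)) =
        -∑ u ∈ Finset.Icc 1 (K * W),
        cf u * (xEntry M s (u : ℤ) m ωb * (n (u : ℤ) ωb - lamPP M s ω (u : ℤ) ωb)) := by
      rw [← Finset.sum_neg_distrib]
      apply Finset.sum_congr rfl
      intro u _
      ring
    rcases lt_abs.1 hm with h | h
    · exact Or.inl (Set.mem_setOf_eq ▸ h.le)
    · refine Or.inr ?_
      show aB ≤ _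
      rw [hnegsum]
      linarith
  have hunion : μ ({ωb | ∀ m : Fin M, |∑ u ∈ Finset.Icc 1 (K * W),
      cf u * (xEntry M s (u : ℤ) m ωb * (n (u : ℤ) ωb - lamPP M s ω (u : ℤ) ωb))| ≤ aB}ᶜ) ≤
      ∑ m : Fin M, (μ {ωb | aB ≤ ∑ u ∈ Finset.Icc 1 (K * W),
        cf u * (xEntry M s (u : ℤ) m ωb * (n (u : ℤ) ωb - lamPP M s ω (u : ℤ) ωb))} +
        μ {ωb | aB ≤ ∑ u ∈ Finset.Icc 1 (K * W),
        -cf u * (xEntry M s (u : ℤ) m ωb * (n (u : ℤ) ωb - lamPP M s ω (u : ℤ) ωb))}) :=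
    (measure_mono hsub).trans ((measure_iUnion_fintype_le μ _).trans
      (Finset.sum_le_sum fun m _ => measure_union_le _ _))
  have hcompl : (μ ({ωb | ∀ m : Fin M, |∑ u ∈ Finset.Icc 1 (K * W),
      cf u * (xEntry M s (u : ℤ) m ωb * (n (u : ℤ) ωb - lamPP M s ω (u : ℤ) ωb))| ≤ aB}ᶜ)).toReal
      ≤ 2 / (M : ℝ) ^ d := by
    have hne : ∀ m : Fin M, (μ {ωb | aB ≤ ∑ u ∈ Finset.Icc 1 (K * W),
        cf u * (xEntry M s (u : ℤ) m ωb * (n (u : ℤ) ωb - lamPP M s ω (u : ℤ) ωb))} +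
        μ {ωb | aB ≤ ∑ u ∈ Finset.Icc 1 (K * W),
        -cf u * (xEntry M s (u : ℤ) m ωb * (n (u : ℤ) ωb - lamPP M s ω (u : ℤ) ωb))}) ≠ ⊤ :=
      fun m => ENNReal.add_ne_top.2 ⟨measure_ne_top μ _, measure_ne_top μ _⟩
    have h1 := ENNReal.toReal_mono (ENNReal.sum_ne_top.2 fun m _ => hne m) hunion
    rw [ENNReal.toReal_sum (fun m _ => hne m)] at h1
    have h2 : ∑ m : Fin M, (μ {ωb | aB ≤ ∑ u ∈ Finset.Icc 1 (K * W),
        cf u * (xEntry M s (u : ℤ) m ωb * (n (u : ℤ) ωb - lamPP M s ω (u : ℤ) ωb))} +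
        μ {ωb | aB ≤ ∑ u ∈ Finset.Icc 1 (K * W),
        -cf u * (xEntry M s (u : ℤ) m ωb * (n (u : ℤ) ωb -
          lamPP M s ω (u : ℤ) ωb))}).toReal ≤ ∑ _m : Fin M, (P + P) := by
      apply Finset.sum_le_sum
      intro m _
      rw [ENNReal.toReal_add (measure_ne_top μ _) (measure_ne_top μ _)]
      exact add_le_add (hpos m) (hneg m)
    have h3 : ∑ _m : Fin M, (P + P) = (M : ℝ) * (P + P) := by
      rw [Finset.sum_const, Finset.card_univ, Fintype.card_fin, nsmul_eq_mul]
    have h4 : (M : ℝ) * (P + P) = 2 / (M : ℝ) ^ d := by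
      have hMd : (M : ℝ) ^ d = Real.exp (d * Real.log M) := by
        rw [Real.rpow_def_of_pos hM0 d, mul_comm]
      rw [hMd, eq_div_iff (Real.exp_ne_zero _)]
      have e1 : P * Real.exp (d * Real.log M) = ((M : ℝ))⁻¹ := by
        rw [hP, ← Real.exp_add,
          show -((d + 1) * Real.log M) + d * Real.log M = -Real.log M by ring,
          Real.exp_neg, Real.exp_log hM0]
      calc (M : ℝ) * (P + P) * Real.exp (d * Real.log M)
          = 2 * (M : ℝ) * (P * Real.exp (d * Real.log M)) := by ring
        _ = 2 * (M : ℝ) * ((M : ℝ))⁻¹ := by rw [e1]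
        _ = 2 := by field_simp
    linarith
  -- conclude
  have hadd := measure_add_measure_compl (μ := μ) hEmeas
  rw [measure_univ] at hadd
  have htot : (μ {ωb | ∀ m : Fin M, |∑ u ∈ Finset.Icc 1 (K * W),
      cf u * (xEntry M s (u : ℤ) m ωb * (n (u : ℤ) ωb - lamPP M s ω (u : ℤ) ωb))| ≤ aB}).toReal +
      (μ ({ωb | ∀ m : Fin M, |∑ u ∈ Finset.Icc 1 (K * W),
      cf u * (xEntry M s (u : ℤ) m ωb * (n (u : ℤ) ωb -
        lamPP M s ω (u : ℤ) ωb))| ≤ aB}ᶜ)).toReal = 1 := by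
    rw [← ENNReal.toReal_add (measure_ne_top μ _) (measure_ne_top μ _), hadd, ENNReal.toReal_one]
  linarith
end
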